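/- arXiv:1507.08908 — 5 statements merged into one kernel-verified Lean document; each statement's English description precedes it below -/
import Mathlib

section
/- Let A = A₀ ⊕ A₁ be a superspace with two even bilinear operations [·,·] and ∘ and an even linear map α, and let L(A), with its bracket [−,−] and the even linear map φ defined by φ(a[m]) = α(a)[m] and φ(u[m]) = α(u)[m], be the affinization of A. If (L(A), [−,−], φ) is a Hom-Lie superalgebra, then (A, [·,·], ∘, α) is a super Hom-Gel'fand-Dorfman bialgebra. -/
noncomputable section

/-- The sign `(-1)^{|x||y|}` attached to parities `i, j` in `ℤ₂`. -/
def sg (i j : ZMod 2) : ℂ := (-1 : ℂ) ^ (i.val * j.val)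

variable {A : Type*} [AddCommGroup A] [Module ℂ A]

/-- `gr` makes `A` into a superspace: `A = A₀ ⊕ A₁`. -/
def IsSupergrading (gr : ZMod 2 → Submodule ℂ A) : Prop :=
  (∀ x : A, ∃ x0 ∈ gr 0, ∃ x1 ∈ gr 1, x = x0 + x1) ∧ (gr 0 ⊓ gr 1 = ⊥)

/-- An even linear map: it preserves the grading. -/
def EvenLin (gr : ZMod 2 → Submodule ℂ A) (α : A →ₗ[ℂ] A) : Prop :=
  ∀ i : ZMod 2, ∀ x ∈ gr i, α x ∈ gr i

/-- An even bilinear map: it adds parities. -/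
def EvenBilin (gr : ZMod 2 → Submodule ℂ A) (m : A →ₗ[ℂ] A →ₗ[ℂ] A) : Prop :=
  ∀ i j : ZMod 2, ∀ x ∈ gr i, ∀ y ∈ gr j, m x y ∈ gr (i + j)

/-- A Hom-Lie superalgebra structure on the superspace `(A, gr)`. -/
def HomLieSuper (gr : ZMod 2 → Submodule ℂ A) (br : A →ₗ[ℂ] A →ₗ[ℂ] A)
    (α : A →ₗ[ℂ] A) : Prop :=
  EvenLin gr α ∧ EvenBilin gr br ∧
  (∀ (i j : ZMod 2), ∀ x ∈ gr i, ∀ y ∈ gr j, br x y = -(sg i j • br y x)) ∧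
  (∀ (i j k : ZMod 2), ∀ x ∈ gr i, ∀ y ∈ gr j, ∀ z ∈ gr k,
    sg i k • br (br x y) (α z) + sg i j • br (br y z) (α x)
      + sg j k • br (br z x) (α y) = 0)

/-- A Hom-Novikov superalgebra structure on the superspace `(A, gr)`. -/
def HomNovikovSuper (gr : ZMod 2 → Submodule ℂ A) (c : A →ₗ[ℂ] A →ₗ[ℂ] A)
    (α : A →ₗ[ℂ] A) : Prop :=
  EvenLin gr α ∧ EvenBilin gr c ∧
  (∀ (i j k : ZMod 2), ∀ x ∈ gr i, ∀ y ∈ gr j, ∀ z ∈ gr k,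
    c (c x y) (α z) - c (α x) (c y z) = sg i j • (c (c y x) (α z) - c (α y) (c x z))) ∧
  (∀ (i j k : ZMod 2), ∀ x ∈ gr i, ∀ y ∈ gr j, ∀ z ∈ gr k,
    c (c x y) (α z) = sg j k • c (c x z) (α y))

/-- A super Hom-Gel'fand-Dorfman bialgebra structure on the superspace `(A, gr)`. -/
def SuperHomGD (gr : ZMod 2 → Submodule ℂ A) (br c : A →ₗ[ℂ] A →ₗ[ℂ] A)
    (α : A →ₗ[ℂ] A) : Prop :=
  HomLieSuper gr br α ∧ HomNovikovSuper gr c α ∧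
  (∀ (i j k : ZMod 2), ∀ x ∈ gr i, ∀ y ∈ gr j, ∀ z ∈ gr k,
    br (c x y) (α z) - sg j k • br (c x z) (α y) + c (br x y) (α z)
      - sg j k • c (br x z) (α y) - c (α x) (br y z) = 0)

/-- A Lie superalgebra structure on the superspace `(A, gr)`. -/
def LieSuper (gr : ZMod 2 → Submodule ℂ A) (br : A →ₗ[ℂ] A →ₗ[ℂ] A) : Prop :=
  EvenBilin gr br ∧
  (∀ (i j : ZMod 2), ∀ x ∈ gr i, ∀ y ∈ gr j, br x y = -(sg i j • br y x)) ∧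
  (∀ (i j k : ZMod 2), ∀ x ∈ gr i, ∀ y ∈ gr j, ∀ z ∈ gr k,
    sg i k • br (br x y) z + sg i j • br (br y z) x + sg j k • br (br z x) y = 0)

/-- A Novikov superalgebra structure on the superspace `(A, gr)`. -/
def NovikovSuper (gr : ZMod 2 → Submodule ℂ A) (c : A →ₗ[ℂ] A →ₗ[ℂ] A) : Prop :=
  EvenBilin gr c ∧
  (∀ (i j k : ZMod 2), ∀ x ∈ gr i, ∀ y ∈ gr j, ∀ z ∈ gr k,
    c (c x y) z - c x (c y z) = sg i j • (c (c y x) z - c y (c x z))) ∧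
  (∀ (i j k : ZMod 2), ∀ x ∈ gr i, ∀ y ∈ gr j, ∀ z ∈ gr k,
    c (c x y) z = sg j k • c (c x z) y)

/-- A super Gel'fand-Dorfman bialgebra structure on the superspace `(A, gr)`. -/
def SuperGD (gr : ZMod 2 → Submodule ℂ A) (br c : A →ₗ[ℂ] A →ₗ[ℂ] A) : Prop :=
  LieSuper gr br ∧ NovikovSuper gr c ∧
  (∀ (i j k : ZMod 2), ∀ x ∈ gr i, ∀ y ∈ gr j, ∀ z ∈ gr k,
    br (c x y) z - sg j k • br (c x z) y + c (br x y) z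
      - sg j k • c (br x z) y - c x (br y z) = 0)


/-- The grading induced on `σ →₀ A` by a grading of `A` (coefficientwise). -/
def grFinsupp {A : Type*} [AddCommGroup A] [Module ℂ A] (σ : Type*)
    (gr : ZMod 2 → Submodule ℂ A) (i : ZMod 2) : Submodule ℂ (σ →₀ A) where
  carrier := {f | ∀ s : σ, f s ∈ gr i}
  add_mem' := by
    intro f g hf hg s
    rw [Finsupp.add_apply]
    exact add_mem (hf s) (hg s)
  zero_mem' := by
    intro s
    rw [Finsupp.zero_apply]
    exact zero_mem _
  smul_mem' := by
    intro t f hf s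
    rw [Finsupp.smul_apply]
    exact Submodule.smul_mem _ t (hf s)

/-- The bracket of the affinization `L(A)`, determined on the homogeneous
generators `a[m] = a ⊗ tᵐ` (for `a ∈ A₀`) and `u[m] = u ⊗ t^{m+1/2}` (for `u ∈ A₁`). -/
def AffBracket {A : Type*} [AddCommGroup A] [Module ℂ A]
    (gr : ZMod 2 → Submodule ℂ A) (br c : A →ₗ[ℂ] A →ₗ[ℂ] A)
    (B : (ℤ →₀ A) →ₗ[ℂ] (ℤ →₀ A) →ₗ[ℂ] (ℤ →₀ A)) : Prop :=
  (∀ (m n : ℤ), ∀ a ∈ gr 0, ∀ b ∈ gr 0,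
    B (Finsupp.single m a) (Finsupp.single n b)
      = Finsupp.single (m + n) (br a b)
        + Finsupp.single (m + n - 1) ((m : ℂ) • c a b - (n : ℂ) • c b a)) ∧
  (∀ (m n : ℤ), ∀ a ∈ gr 0, ∀ u ∈ gr 1,
    B (Finsupp.single m a) (Finsupp.single n u)
      = Finsupp.single (m + n) (br a u)
        + Finsupp.single (m + n - 1)
            ((m : ℂ) • c a u - ((n : ℂ) + (1 / 2 : ℂ)) • c u a)) ∧
  (∀ (m n : ℤ), ∀ u ∈ gr 1, ∀ a ∈ gr 0,
    B (Finsupp.single n u) (Finsupp.single m a)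
      = Finsupp.single (m + n) (br u a)
        + Finsupp.single (m + n - 1)
            (((n : ℂ) + (1 / 2 : ℂ)) • c u a - (m : ℂ) • c a u)) ∧
  (∀ (m n : ℤ), ∀ u ∈ gr 1, ∀ v ∈ gr 1,
    B (Finsupp.single m u) (Finsupp.single n v)
      = Finsupp.single (m + n + 1) (br u v)
        + Finsupp.single (m + n)
            (((m : ℂ) + (1 / 2 : ℂ)) • c u v + ((n : ℂ) + (1 / 2 : ℂ)) • c v u))


section AuxSHGD

lemma aux_zmod2_cases : ∀ i : ZMod 2, i = 0 ∨ i = 1 := by decide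

/-- half the parity, as a complex number -/
def aux_ee (i : ZMod 2) : ℂ := (i.val : ℂ) / 2

/-- the weight `s + |i|/2` -/
def aux_w (i : ZMod 2) (s : ℤ) : ℂ := (s : ℂ) + aux_ee i

/-- the integer degree shift `|i||j|` -/
def aux_dl (i j : ZMod 2) : ℤ := (i.val * j.val : ℤ)

lemma aux_v0 : (0 : ZMod 2).val = 0 := rfl
lemma aux_v1 : (1 : ZMod 2).val = 1 := rfl
lemma aux_add11 : (1 : ZMod 2) + 1 = 0 := rfl

lemma aux_dl_cyc : ∀ i j k : ZMod 2,
    aux_dl j k + aux_dl (j+k) i = aux_dl i j + aux_dl (i+j) k := by decide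

lemma aux_dl_comm' : ∀ i j : ZMod 2, aux_dl j i = aux_dl i j := by decide

lemma aux_dl_comm (i j : ZMod 2) : aux_dl j i = aux_dl i j := aux_dl_comm' i j

lemma aux_sg00 : sg 0 0 = 1 := by norm_num [sg, aux_v0]
lemma aux_sg01 : sg 0 1 = 1 := by norm_num [sg, aux_v0, aux_v1]
lemma aux_sg10 : sg 1 0 = 1 := by norm_num [sg, aux_v0, aux_v1]
lemma aux_sg11 : sg 1 1 = -1 := by norm_num [sg, aux_v1]

lemma aux_w_add (i j : ZMod 2) (s t : ℤ) :
    aux_w (i+j) (s + t + aux_dl i j) = aux_w i s + aux_w j t := by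
  rcases aux_zmod2_cases i with hi | hi <;> rcases aux_zmod2_cases j with hj | hj <;>
      subst hi <;> subst hj <;>
    (simp only [aux_add11, zero_add, add_zero] ;
     simp only [aux_w, aux_ee, aux_dl, aux_v0, aux_v1] ; push_cast ; ring)

lemma aux_w_add' (i j : ZMod 2) (s t : ℤ) :
    aux_w (i+j) (s + t + aux_dl i j - 1) = aux_w i s + aux_w j t - 1 := by
  rcases aux_zmod2_cases i with hi | hi <;> rcases aux_zmod2_cases j with hj | hj <;>
      subst hi <;> subst hj <;>
    (simp only [aux_add11, zero_add, add_zero] ;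
     simp only [aux_w, aux_ee, aux_dl, aux_v0, aux_v1] ; push_cast ; ring)

variable {A : Type*} [AddCommGroup A] [Module ℂ A]

lemma aux_mem_single {gr : ZMod 2 → Submodule ℂ A} {i : ZMod 2} (s : ℤ) {x : A}
    (hx : x ∈ gr i) : Finsupp.single s x ∈ grFinsupp ℤ gr i := by
  intro t
  classical
  rw [Finsupp.single_apply]
  split
  · exact hx
  · exact zero_mem _

lemma aux_Bexp {gr : ZMod 2 → Submodule ℂ A} {br c : A →ₗ[ℂ] A →ₗ[ℂ] A}
    {B : (ℤ →₀ A) →ₗ[ℂ] (ℤ →₀ A) →ₗ[ℂ] (ℤ →₀ A)} (hB : AffBracket gr br c B)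
    (i j : ZMod 2) (s t : ℤ) (x : A) (hx : x ∈ gr i) (y : A) (hy : y ∈ gr j) :
    B (Finsupp.single s x) (Finsupp.single t y)
      = Finsupp.single (s + t + aux_dl i j) (br x y)
        + Finsupp.single (s + t + aux_dl i j - 1)
            (aux_w i s • c x y - (sg i j * aux_w j t) • c y x) := by
  obtain ⟨h00, h01, h10, h11⟩ := hB
  rcases aux_zmod2_cases i with hi | hi <;> rcases aux_zmod2_cases j with hj | hj <;>
      subst hi <;> subst hj
  · have hd : s + t + aux_dl 0 0 = s + t := by simp [aux_dl, aux_v0]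
    have hv : aux_w 0 s • c x y - (sg 0 0 * aux_w 0 t) • c y x
        = (s : ℂ) • c x y - (t : ℂ) • c y x := by
      norm_num [aux_w, aux_ee, sg, aux_v0]
    rw [h00 s t x hx y hy, hd, hv]
  · have hd : s + t + aux_dl 0 1 = s + t := by simp [aux_dl, aux_v0, aux_v1]
    have hv : aux_w 0 s • c x y - (sg 0 1 * aux_w 1 t) • c y x
        = (s : ℂ) • c x y - ((t : ℂ) + (1 / 2 : ℂ)) • c y x := by
      norm_num [aux_w, aux_ee, sg, aux_v0, aux_v1]
    rw [h01 s t x hx y hy, hd, hv]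
  · have hd : s + t + aux_dl 1 0 = t + s := by
      simp [aux_dl, aux_v0, aux_v1]; ring
    have hv : aux_w 1 s • c x y - (sg 1 0 * aux_w 0 t) • c y x
        = ((s : ℂ) + (1 / 2 : ℂ)) • c x y - (t : ℂ) • c y x := by
      norm_num [aux_w, aux_ee, sg, aux_v0, aux_v1]
    rw [h10 t s x hx y hy, hd, hv]
  · have hd : s + t + aux_dl 1 1 = s + t + 1 := by simp [aux_dl, aux_v1]
    have hd2 : s + t + 1 - 1 = s + t := by omega
    have hv : aux_w 1 s • c x y - (sg 1 1 * aux_w 1 t) • c y x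
        = ((s : ℂ) + (1 / 2 : ℂ)) • c x y + ((t : ℂ) + (1 / 2 : ℂ)) • c y x := by
      norm_num [aux_w, aux_ee, sg, aux_v1] ; try module
    rw [h11 s t x hx y hy, hd, hd2, hv]

lemma aux_skew {gr : ZMod 2 → Submodule ℂ A} {br c : A →ₗ[ℂ] A →ₗ[ℂ] A} {α : A →ₗ[ℂ] A}
    {B : (ℤ →₀ A) →ₗ[ℂ] (ℤ →₀ A) →ₗ[ℂ] (ℤ →₀ A)} (hB : AffBracket gr br c B)
    (hHL : HomLieSuper (grFinsupp ℤ gr) B (Finsupp.mapRange.linearMap α))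
    (i j : ZMod 2) (x y : A) (hx : x ∈ gr i) (hy : y ∈ gr j) :
    br x y = -(sg i j • br y x) := by
  classical
  have h := hHL.2.2.1 i j (Finsupp.single 0 x) (aux_mem_single 0 hx)
      (Finsupp.single 0 y) (aux_mem_single 0 hy)
  rw [aux_Bexp hB i j 0 0 x hx y hy, aux_Bexp hB j i 0 0 y hy x hx,
      aux_dl_comm i j] at h
  have n1 : (0:ℤ) + 0 + aux_dl i j - 1 ≠ 0 + 0 + aux_dl i j := by omega
  have n1' : (0:ℤ) + aux_dl i j - 1 ≠ 0 + aux_dl i j := by omega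
  have h0 := DFunLike.congr_fun h ((0:ℤ) + 0 + aux_dl i j)
  simp only [Finsupp.add_apply, Finsupp.neg_apply, Finsupp.smul_apply,
    Finsupp.single_eq_same, Finsupp.single_eq_of_ne' n1, Finsupp.single_eq_of_ne' n1',
    smul_zero, add_zero] at h0
  exact h0

lemma aux_pointEqs {gr : ZMod 2 → Submodule ℂ A} {br c : A →ₗ[ℂ] A →ₗ[ℂ] A}
    {α : A →ₗ[ℂ] A}
    (hbre : EvenBilin gr br) (hce : EvenBilin gr c) (hαe : EvenLin gr α)
    {B : (ℤ →₀ A) →ₗ[ℂ] (ℤ →₀ A) →ₗ[ℂ] (ℤ →₀ A)} (hB : AffBracket gr br c B)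
    (hHL : HomLieSuper (grFinsupp ℤ gr) B (Finsupp.mapRange.linearMap α))
    (i j k : ZMod 2) (x y z : A) (hx : x ∈ gr i) (hy : y ∈ gr j) (hz : z ∈ gr k)
    (s t r : ℤ) :
    (sg i k • br (br x y) (α z) + sg i j • br (br y z) (α x)
        + sg j k • br (br z x) (α y) = 0)
    ∧ (sg i k • ((aux_w i s + aux_w j t) • c (br x y) (α z)
          - (sg (i+j) k * aux_w k r) • c (α z) (br x y)
          + (aux_w i s • br (c x y) (α z) - (sg i j * aux_w j t) • br (c y x) (α z)))
      + sg i j • ((aux_w j t + aux_w k r) • c (br y z) (α x)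
          - (sg (j+k) i * aux_w i s) • c (α x) (br y z)
          + (aux_w j t • br (c y z) (α x) - (sg j k * aux_w k r) • br (c z y) (α x)))
      + sg j k • ((aux_w k r + aux_w i s) • c (br z x) (α y)
          - (sg (k+i) j * aux_w j t) • c (α y) (br z x)
          + (aux_w k r • br (c z x) (α y) - (sg k i * aux_w i s) • br (c x z) (α y)))
        = 0)
    ∧ (sg i k • ((aux_w i s + aux_w j t - 1)
            • (aux_w i s • c (c x y) (α z) - (sg i j * aux_w j t) • c (c y x) (α z))
          - (sg (i+j) k * aux_w k r)
            • (aux_w i s • c (α z) (c x y) - (sg i j * aux_w j t) • c (α z) (c y x)))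
      + sg i j • ((aux_w j t + aux_w k r - 1)
            • (aux_w j t • c (c y z) (α x) - (sg j k * aux_w k r) • c (c z y) (α x))
          - (sg (j+k) i * aux_w i s)
            • (aux_w j t • c (α x) (c y z) - (sg j k * aux_w k r) • c (α x) (c z y)))
      + sg j k • ((aux_w k r + aux_w i s - 1)
            • (aux_w k r • c (c z x) (α y) - (sg k i * aux_w i s) • c (c x z) (α y))
          - (sg (k+i) j * aux_w j t)
            • (aux_w k r • c (α y) (c z x) - (sg k i * aux_w i s) • c (α y) (c x z)))
        = 0) := by
  classical
  have hJ := hHL.2.2.2 i j k (Finsupp.single s x) (aux_mem_single s hx)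
      (Finsupp.single t y) (aux_mem_single t hy)
      (Finsupp.single r z) (aux_mem_single r hz)
  simp only [Finsupp.mapRange.linearMap_apply, Finsupp.mapRange_single] at hJ
  rw [aux_Bexp hB i j s t x hx y hy, aux_Bexp hB j k t r y hy z hz,
      aux_Bexp hB k i r s z hz x hx] at hJ
  simp only [map_add, LinearMap.add_apply] at hJ
  have hxy : br x y ∈ gr (i+j) := hbre i j x hx y hy
  have hyz : br y z ∈ gr (j+k) := hbre j k y hy z hz
  have hzx : br z x ∈ gr (k+i) := hbre k i z hz x hx
  have hPxy : aux_w i s • c x y - (sg i j * aux_w j t) • c y x ∈ gr (i+j) := by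
    refine sub_mem (Submodule.smul_mem _ _ (hce i j x hx y hy))
      (Submodule.smul_mem _ _ ?_)
    rw [add_comm i j]; exact hce j i y hy x hx
  have hPyz : aux_w j t • c y z - (sg j k * aux_w k r) • c z y ∈ gr (j+k) := by
    refine sub_mem (Submodule.smul_mem _ _ (hce j k y hy z hz))
      (Submodule.smul_mem _ _ ?_)
    rw [add_comm j k]; exact hce k j z hz y hy
  have hPzx : aux_w k r • c z x - (sg k i * aux_w i s) • c x z ∈ gr (k+i) := by
    refine sub_mem (Submodule.smul_mem _ _ (hce k i z hz x hx))
      (Submodule.smul_mem _ _ ?_)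
    rw [add_comm k i]; exact hce i k x hx z hz
  have hαx : α x ∈ gr i := hαe i x hx
  have hαy : α y ∈ gr j := hαe j y hy
  have hαz : α z ∈ gr k := hαe k z hz
  rw [aux_Bexp hB (i+j) k (s + t + aux_dl i j) r _ hxy _ hαz,
      aux_Bexp hB (i+j) k (s + t + aux_dl i j - 1) r _ hPxy _ hαz,
      aux_Bexp hB (j+k) i (t + r + aux_dl j k) s _ hyz _ hαx,
      aux_Bexp hB (j+k) i (t + r + aux_dl j k - 1) s _ hPyz _ hαx,
      aux_Bexp hB (k+i) j (r + s + aux_dl k i) t _ hzx _ hαy,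
      aux_Bexp hB (k+i) j (r + s + aux_dl k i - 1) t _ hPzx _ hαy] at hJ
  rw [aux_w_add i j s t, aux_w_add' i j s t, aux_w_add j k t r, aux_w_add' j k t r,
      aux_w_add k i r s, aux_w_add' k i r s] at hJ
  have hc1 := aux_dl_cyc i j k
  have hc2 := aux_dl_cyc k i j
  have e1' : s + t + aux_dl i j - 1 + r + aux_dl (i+j) k
      = s + t + aux_dl i j + r + aux_dl (i+j) k - 1 := by omega
  have e2 : t + r + aux_dl j k + s + aux_dl (j+k) i
      = s + t + aux_dl i j + r + aux_dl (i+j) k := by omega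
  have e2' : t + r + aux_dl j k - 1 + s + aux_dl (j+k) i
      = s + t + aux_dl i j + r + aux_dl (i+j) k - 1 := by omega
  have e3 : r + s + aux_dl k i + t + aux_dl (k+i) j
      = s + t + aux_dl i j + r + aux_dl (i+j) k := by omega
  have e3' : r + s + aux_dl k i - 1 + t + aux_dl (k+i) j
      = s + t + aux_dl i j + r + aux_dl (i+j) k - 1 := by omega
  rw [e1', e2, e2', e3, e3'] at hJ
  simp only [map_sub, map_smul, LinearMap.sub_apply, LinearMap.smul_apply] at hJ
  have n1 : s + t + aux_dl i j + r + aux_dl (i+j) k - 1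
      ≠ s + t + aux_dl i j + r + aux_dl (i+j) k := by omega
  have n2 : s + t + aux_dl i j + r + aux_dl (i+j) k - 1 - 1
      ≠ s + t + aux_dl i j + r + aux_dl (i+j) k := by omega
  have n3 : s + t + aux_dl i j + r + aux_dl (i+j) k
      ≠ s + t + aux_dl i j + r + aux_dl (i+j) k - 1 := by omega
  have n4 : s + t + aux_dl i j + r + aux_dl (i+j) k - 1 - 1
      ≠ s + t + aux_dl i j + r + aux_dl (i+j) k - 1 := by omega
  have n5 : s + t + aux_dl i j + r + aux_dl (i+j) k
      ≠ s + t + aux_dl i j + r + aux_dl (i+j) k - 1 - 1 := by omega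
  have n6 : s + t + aux_dl i j + r + aux_dl (i+j) k - 1
      ≠ s + t + aux_dl i j + r + aux_dl (i+j) k - 1 - 1 := by omega
  have h0 := DFunLike.congr_fun hJ (s + t + aux_dl i j + r + aux_dl (i+j) k)
  have h1 := DFunLike.congr_fun hJ (s + t + aux_dl i j + r + aux_dl (i+j) k - 1)
  have h2 := DFunLike.congr_fun hJ (s + t + aux_dl i j + r + aux_dl (i+j) k - 1 - 1)
  simp only [Finsupp.add_apply, Finsupp.smul_apply, Finsupp.single_eq_same,
    Finsupp.single_eq_of_ne n1, Finsupp.single_eq_of_ne n2, Finsupp.single_eq_of_ne n3,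
    Finsupp.single_eq_of_ne n4, Finsupp.single_eq_of_ne n5, Finsupp.single_eq_of_ne n6,
    Finsupp.coe_zero, Pi.zero_apply, smul_zero, add_zero, zero_add] at h0 h1 h2
  refine ⟨by linear_combination (norm := module) h0,
      by linear_combination (norm := module) h1,
      by linear_combination (norm := module) h2⟩

end AuxSHGD

set_option maxHeartbeats 2000000 in
/-- If the affinization `(L(A), [−,−], φ)`, with `φ(x[m]) = α(x)[m]`,
is a Hom-Lie superalgebra, then `(A, [·,·], ∘, α)` is a super Hom-Gel'fand-Dorfman
bialgebra. -/
theorem superHomGD_of_affinization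
    {A : Type*} [AddCommGroup A] [Module ℂ A]
    (gr : ZMod 2 → Submodule ℂ A) (hgr : IsSupergrading gr)
    (br c : A →ₗ[ℂ] A →ₗ[ℂ] A) (α : A →ₗ[ℂ] A)
    (hbre : EvenBilin gr br) (hce : EvenBilin gr c) (hαe : EvenLin gr α)
    (B : (ℤ →₀ A) →ₗ[ℂ] (ℤ →₀ A) →ₗ[ℂ] (ℤ →₀ A))
    (hB : AffBracket gr br c B)
    (hHL : HomLieSuper (grFinsupp ℤ gr) B (Finsupp.mapRange.linearMap α)) :
    SuperHomGD gr br c α := by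
  refine ⟨⟨hαe, hbre, ?_, ?_⟩, ⟨hαe, hce, ?_, ?_⟩, ?_⟩
  · intro i j x hx y hy
    exact aux_skew hB hHL i j x y hx hy
  · intro i j k x hx y hy z hz
    exact (aux_pointEqs hbre hce hαe hB hHL i j k x y z hx hy hz 0 0 0).1
  · -- left Hom-symmetry of the Novikov product
    intro i j k x hx y hy z hz
    have h11 := (aux_pointEqs hbre hce hαe hB hHL i j k x y z hx hy hz 1 1 1).2.2
    have h12 := (aux_pointEqs hbre hce hαe hB hHL i j k x y z hx hy hz 1 2 1).2.2
    have h21 := (aux_pointEqs hbre hce hαe hB hHL i j k x y z hx hy hz 2 1 1).2.2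
    have h22 := (aux_pointEqs hbre hce hαe hB hHL i j k x y z hx hy hz 2 2 1).2.2
    rcases aux_zmod2_cases i with hi | hi <;> rcases aux_zmod2_cases j with hj | hj <;>
        rcases aux_zmod2_cases k with hk | hk <;> subst hi <;> subst hj <;> subst hk <;>
      simp only [aux_sg00, aux_sg01, aux_sg10, aux_sg11, zero_add, add_zero, aux_add11,
        aux_w, aux_ee, aux_v0, aux_v1] at h11 h12 h21 h22 ⊢ <;>
      (try norm_num at h11 h12 h21 h22 ⊢) <;>
      first
        | linear_combination (norm := module) h22 - h21 - h12 + h11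
        | linear_combination (norm := module) h21 - h22 + h12 - h11
  · -- right Hom-commutativity of the Novikov product
    intro i j k x hx y hy z hz
    have h1 := (aux_pointEqs hbre hce hαe hB hHL i j k x y z hx hy hz 1 1 1).2.2
    have h2 := (aux_pointEqs hbre hce hαe hB hHL i j k x y z hx hy hz 2 1 1).2.2
    have h3 := (aux_pointEqs hbre hce hαe hB hHL i j k x y z hx hy hz 3 1 1).2.2
    rcases aux_zmod2_cases i with hi | hi <;> rcases aux_zmod2_cases j with hj | hj <;>
        rcases aux_zmod2_cases k with hk | hk <;> subst hi <;> subst hj <;> subst hk <;>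
      simp only [aux_sg00, aux_sg01, aux_sg10, aux_sg11, zero_add, add_zero, aux_add11,
        aux_w, aux_ee, aux_v0, aux_v1] at h1 h2 h3 ⊢ <;>
      (try norm_num at h1 h2 h3 ⊢) <;>
      first
        | linear_combination (norm := module) (1/2 : ℂ) • h3 - h2 + (1/2 : ℂ) • h1
        | linear_combination (norm := module) h2 - (1/2 : ℂ) • h3 - (1/2 : ℂ) • h1
  · -- compatibility
    intro i j k x hx y hy z hz
    have h1 := (aux_pointEqs hbre hce hαe hB hHL i j k x y z hx hy hz 1 1 1).2.1
    have h2 := (aux_pointEqs hbre hce hαe hB hHL i j k x y z hx hy hz 2 1 1).2.1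
    have hzx := aux_skew hB hHL k i z x hz hx
    have hc : c (br z x) (α y) = -(sg k i • c (br x z) (α y)) := by
      rw [hzx, map_neg, map_smul, LinearMap.neg_apply, LinearMap.smul_apply]
    rcases aux_zmod2_cases i with hi | hi <;> rcases aux_zmod2_cases j with hj | hj <;>
        rcases aux_zmod2_cases k with hk | hk <;> subst hi <;> subst hj <;> subst hk <;>
      simp only [aux_sg00, aux_sg01, aux_sg10, aux_sg11, zero_add, add_zero, aux_add11,
        aux_w, aux_ee, aux_v0, aux_v1] at h1 h2 hc ⊢ <;>
      (try norm_num at h1 h2 hc ⊢) <;>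
      first
        | linear_combination (norm := module) h2 - h1 - hc
        | linear_combination (norm := module) h2 - h1 + hc
        | linear_combination (norm := module) h1 - h2 - hc
        | linear_combination (norm := module) h1 - h2 + hc

end
end

section
/- Let A be a superspace with two even bilinear operations ∘ and [·,·] and an even linear map α. Let R = ℂ[∂] ⊗ A be the free ℂ[∂]-module over A, extend α to R by α(f(∂)u) = f(∂)α(u), and define the λ-bracket on generators by [u_λ v] = [v,u] + (∂+λ)(v∘u) + (−1)^{|u||v|} λ (u∘v) for homogeneous u,v ∈ A, extended by [f(∂)u_λ h(∂)v] = f(−λ)h(∂+λ)[u_λ v]. If (R, [·_λ·], α) is a Hom-Lie conformal superalgebra, then (A, [·,·], ∘, α) is a super Hom-Gel'fand-Dorfman bialgebra. -/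
noncomputable section

variable {A : Type*} [AddCommGroup A] [Module ℂ A]

section Conformal

variable {M : Type*} [AddCommGroup M] [Module ℂ M]

/-- Multiplication by `λ` on `ℂ[λ] ⊗ M`, encoded as `ℕ →₀ M`. -/
def lmulV : (ℕ →₀ M) →ₗ[ℂ] (ℕ →₀ M) := Finsupp.lmapDomain M ℂ (· + 1)

/-- Coefficientwise action of `∂` on `ℂ[λ] ⊗ M`. -/
def dVmap (dM : M →ₗ[ℂ] M) : (ℕ →₀ M) →ₗ[ℂ] (ℕ →₀ M) :=
  Finsupp.mapRange.linearMap dM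

/-- The substitution `λ ↦ −λ−∂` on `ℂ[λ] ⊗ M`:
`λⁿ r ↦ (−λ−∂)ⁿ r = (−1)ⁿ ∑ₖ C(n,k) λᵏ ∂^{n−k} r`. -/
def negSubst (dM : M →ₗ[ℂ] M) (p : ℕ →₀ M) : ℕ →₀ M :=
  p.sum fun n r => ((-1 : ℂ) ^ n) •
    ∑ k ∈ Finset.range (n + 1),
      (n.choose k : ℂ) • Finsupp.single k ((⇑dM)^[n - k] r)

/-- A Hom-Lie conformal superalgebra structure on the `ℂ[∂]`-module `M` (with `∂`
acting via `dM`), graded by `grM`, with λ-bracket `B : M → M → ℂ[λ] ⊗ M` (values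
encoded as `ℕ →₀ M`, the `n`-th coefficient being that of `λⁿ`) and twisting map `αM`.
The Hom-Jacobi identity is stated in `ℂ[λ,μ] ⊗ M`, encoded as `(ℕ × ℕ) →₀ M`, the
`(n,m)` coefficient being that of `λⁿ μᵐ`. -/
def HomLieConformalSuper (grM : ZMod 2 → Submodule ℂ M) (dM : M →ₗ[ℂ] M)
    (B : M →ₗ[ℂ] M →ₗ[ℂ] (ℕ →₀ M)) (αM : M →ₗ[ℂ] M) : Prop :=
  -- `α∂ = ∂α`
  (∀ x : M, αM (dM x) = dM (αM x)) ∧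
  -- `αM` is even
  (∀ i : ZMod 2, ∀ x ∈ grM i, αM x ∈ grM i) ∧
  -- the bracket is even
  (∀ (i j : ZMod 2), ∀ x ∈ grM i, ∀ y ∈ grM j, ∀ n : ℕ, B x y n ∈ grM (i + j)) ∧
  -- conformal sesquilinearity
  (∀ x y : M, B (dM x) y = -(lmulV (B x y))) ∧
  (∀ x y : M, B x (dM y) = dVmap dM (B x y) + lmulV (B x y)) ∧
  -- skew-symmetry `[x_λ y] = −(−1)^{|x||y|}[y_{−λ−∂} x]`
  (∀ (i j : ZMod 2), ∀ x ∈ grM i, ∀ y ∈ grM j,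
    B x y = -(sg i j • negSubst dM (B y x))) ∧
  -- Hom-Jacobi identity
  (∀ (i j k : ZMod 2), ∀ x ∈ grM i, ∀ y ∈ grM j, ∀ z ∈ grM k,
    ((B y z).sum fun m r => (B (αM x) r).sum fun n s =>
        Finsupp.single ((n, m) : ℕ × ℕ) s)
    = ((B x y).sum fun n r => (B r (αM z)).sum fun m s =>
        ∑ t ∈ Finset.range (m + 1),
          (m.choose t : ℂ) • Finsupp.single ((n + t, m - t) : ℕ × ℕ) s)
      + sg i j • ((B x z).sum fun n r => (B (αM y) r).sum fun m s =>
          Finsupp.single ((n, m) : ℕ × ℕ) s))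

end Conformal

/-- The action of `∂` on `R = ℂ[∂] ⊗ A`, encoded as `ℕ →₀ A`. -/
def dR {A : Type*} [AddCommGroup A] [Module ℂ A] : (ℕ →₀ A) →ₗ[ℂ] (ℕ →₀ A) :=
  Finsupp.lmapDomain A ℂ (· + 1)

/-- The λ-bracket `[u_λ v] = [v,u] + (∂+λ)(v∘u) + (−1)^{|u||v|} λ (u∘v)` on
generators `u, v ∈ A` of parities with sign `s = (−1)^{|u||v|}`. -/
def genBr {A : Type*} [AddCommGroup A] [Module ℂ A]
    (br c : A →ₗ[ℂ] A →ₗ[ℂ] A) (s : ℂ) (u v : A) : ℕ →₀ (ℕ →₀ A) :=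
  Finsupp.single 0 (Finsupp.single 0 (br v u) + Finsupp.single 1 (c v u))
    + Finsupp.single 1 (Finsupp.single 0 (c v u + s • c u v))

/-- `B` is the λ-bracket of the quadratic conformal superalgebra associated to
`(A, [·,·], ∘)`: it takes the prescribed values on `A ⊗ A` and is extended by
`[f(∂)u_λ h(∂)v] = f(−λ)h(∂+λ)[u_λ v]`. -/
def AssocBracket {A : Type*} [AddCommGroup A] [Module ℂ A]
    (gr : ZMod 2 → Submodule ℂ A) (br c : A →ₗ[ℂ] A →ₗ[ℂ] A)
    (B : (ℕ →₀ A) →ₗ[ℂ] (ℕ →₀ A) →ₗ[ℂ] (ℕ →₀ (ℕ →₀ A))) : Prop :=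
  ∀ (p q : ℕ) (i j : ZMod 2), ∀ u ∈ gr i, ∀ v ∈ gr j,
    B (Finsupp.single p u) (Finsupp.single q v)
      = ((-1 : ℂ) ^ p) • ((⇑(lmulV (M := ℕ →₀ A)))^[p]
          ((fun x => dVmap (dR (A := A)) x + lmulV x)^[q]
            (genBr br c (sg i j) u v)))

lemma sg_cases (i j : ZMod 2) : sg i j = 1 ∨ sg i j = -1 := by
  unfold sg
  rcases Nat.even_or_odd (i.val * j.val) with h | h
  · exact Or.inl h.neg_one_pow
  · exact Or.inr h.neg_one_pow

lemma sg_comm (i j : ZMod 2) : sg i j = sg j i := by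
  unfold sg; rw [Nat.mul_comm]

lemma sg_add_right (i j k : ZMod 2) : sg i (j + k) = sg i j * sg i k := by
  fin_cases i <;> fin_cases j <;> fin_cases k <;> unfold sg <;> (rw [← pow_add, neg_one_pow_eq_pow_mod_two (R := ℂ) (_ * _), neg_one_pow_eq_pow_mod_two (R := ℂ) (_ + _)]; exact congrArg _ (by decide))

lemma sg_add_left (i j k : ZMod 2) : sg (i + j) k = sg i k * sg j k := by
  fin_cases i <;> fin_cases j <;> fin_cases k <;> unfold sg <;> (rw [← pow_add, neg_one_pow_eq_pow_mod_two (R := ℂ) (_ * _), neg_one_pow_eq_pow_mod_two (R := ℂ) (_ + _)]; exact congrArg _ (by decide))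

lemma sum3 {M N : Type*} [AddCommMonoid M] [AddCommMonoid N]
    (p : ℕ →₀ M) (f : ℕ → M → N)
    (hp : ∀ n, 3 ≤ n → p n = 0) (h0 : ∀ n, f n 0 = 0) :
    p.sum f = f 0 (p 0) + f 1 (p 1) + f 2 (p 2) := by
  rw [Finsupp.sum_of_support_subset p (s := Finset.range 3) ?_ f (fun n _ => h0 n)]
  · simp [Finset.sum_range_succ, add_assoc]
  · intro a ha
    rw [Finset.mem_range]
    by_contra h
    exact (Finsupp.mem_support_iff.mp ha) (hp a (by omega))

section MyHelpers

lemma my_mem_grFinsupp_single {A : Type*} [AddCommGroup A] [Module ℂ A]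
    (gr : ZMod 2 → Submodule ℂ A) {i : ZMod 2} {u : A} (p : ℕ) (hu : u ∈ gr i) :
    Finsupp.single p u ∈ grFinsupp ℕ gr i := by
  intro s
  rw [Finsupp.single_apply]
  split
  · exact hu
  · exact (gr i).zero_mem

variable {A : Type*} [AddCommGroup A] [Module ℂ A]

lemma my_lmulV_single (n : ℕ) (w : ℕ →₀ A) :
    lmulV (Finsupp.single n w) = Finsupp.single (n + 1) w := by
  simp [lmulV, Finsupp.lmapDomain_apply, Finsupp.mapDomain_single]

lemma my_dVmap_single {M : Type*} [AddCommGroup M] [Module ℂ M] (dM : M →ₗ[ℂ] M) (n : ℕ) (w : M) :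
    dVmap dM (Finsupp.single n w) = Finsupp.single n (dM w) := by
  simp [dVmap]

lemma my_dR_single (n : ℕ) (w : A) :
    dR (Finsupp.single n w) = Finsupp.single (n + 1) w := by
  simp [dR, Finsupp.lmapDomain_apply, Finsupp.mapDomain_single]

lemma my_negSubst_pair (a b : ℕ →₀ A) :
    negSubst (dR (A := A)) (Finsupp.single 0 a + Finsupp.single 1 b)
      = Finsupp.single 0 a + (-1 : ℂ) • (Finsupp.single 0 (dR b) + Finsupp.single 1 b) := by
  unfold negSubst
  rw [sum3 _ _ ?_ ?_]
  · simp [Finsupp.single_apply, Finset.sum_range_succ]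
  · intro n hn
    rw [Finsupp.add_apply, Finsupp.single_apply, Finsupp.single_apply,
      if_neg (by omega), if_neg (by omega), add_zero]
  · intro n
    simp

lemma my_sumL (Bmap : (ℕ →₀ A) →ₗ[ℂ] (ℕ →₀ A) →ₗ[ℂ] (ℕ →₀ (ℕ →₀ A)))
    (w : ℕ →₀ A) (p : ℕ →₀ (ℕ →₀ A)) :
    (p.sum fun m r => (Bmap w r).sum fun n s => Finsupp.single ((n, m) : ℕ × ℕ) s)
      = Finsupp.lsum ℂ
          (fun m => (Finsupp.lsum ℂ fun n => Finsupp.lsingle ((n, m) : ℕ × ℕ)) ∘ₗ (Bmap w)) p := by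
  rw [Finsupp.lsum_apply]
  refine Finsupp.sum_congr fun m _ => ?_
  rw [LinearMap.comp_apply, Finsupp.lsum_apply]
  exact Finsupp.sum_congr fun n _ => rfl

lemma my_sumR (Bmap : (ℕ →₀ A) →ₗ[ℂ] (ℕ →₀ A) →ₗ[ℂ] (ℕ →₀ (ℕ →₀ A)))
    (w : ℕ →₀ A) (p : ℕ →₀ (ℕ →₀ A)) :
    (p.sum fun n r => (Bmap r w).sum fun m s =>
        ∑ t ∈ Finset.range (m + 1), (m.choose t : ℂ) • Finsupp.single ((n + t, m - t) : ℕ × ℕ) s)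
      = Finsupp.lsum ℂ
          (fun n => (Finsupp.lsum ℂ fun m => ∑ t ∈ Finset.range (m + 1),
              (m.choose t : ℂ) • Finsupp.lsingle ((n + t, m - t) : ℕ × ℕ)) ∘ₗ (Bmap.flip w)) p := by
  rw [Finsupp.lsum_apply]
  refine Finsupp.sum_congr fun n _ => ?_
  rw [LinearMap.comp_apply, LinearMap.flip_apply, Finsupp.lsum_apply]
  refine Finsupp.sum_congr fun m _ => ?_
  simp

lemma my_sumL2 (Bmap : (ℕ →₀ A) →ₗ[ℂ] (ℕ →₀ A) →ₗ[ℂ] (ℕ →₀ (ℕ →₀ A)))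
    (w : ℕ →₀ A) (p : ℕ →₀ (ℕ →₀ A)) :
    (p.sum fun n r => (Bmap w r).sum fun m s => Finsupp.single ((n, m) : ℕ × ℕ) s)
      = Finsupp.lsum ℂ
          (fun n => (Finsupp.lsum ℂ fun m => Finsupp.lsingle ((n, m) : ℕ × ℕ)) ∘ₗ (Bmap w)) p := by
  rw [Finsupp.lsum_apply]
  refine Finsupp.sum_congr fun n _ => ?_
  rw [LinearMap.comp_apply, Finsupp.lsum_apply]
  exact Finsupp.sum_congr fun m _ => rfl

end MyHelpers

set_option maxHeartbeats 3000000 in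
/-- If `R = ℂ[∂] ⊗ A` with the λ-bracket
`[u_λ v] = [v,u] + (∂+λ)(v∘u) + (−1)^{|u||v|} λ (u∘v)` (extended by
`[f(∂)u_λ h(∂)v] = f(−λ)h(∂+λ)[u_λ v]`) and with `α` extended `ℂ[∂]`-linearly is a
Hom-Lie conformal superalgebra, then `(A, [·,·], ∘, α)` is a super
Hom-Gel'fand-Dorfman bialgebra. -/
theorem superHomGD_of_homLieConformalSuper
    {A : Type*} [AddCommGroup A] [Module ℂ A]
    (gr : ZMod 2 → Submodule ℂ A) (hgr : IsSupergrading gr)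
    (br c : A →ₗ[ℂ] A →ₗ[ℂ] A) (α : A →ₗ[ℂ] A)
    (B : (ℕ →₀ A) →ₗ[ℂ] (ℕ →₀ A) →ₗ[ℂ] (ℕ →₀ (ℕ →₀ A)))
    (hB : AssocBracket gr br c B)
    (hC : HomLieConformalSuper (grFinsupp ℕ gr) dR B (Finsupp.mapRange.linearMap α)) :
    SuperHomGD gr br c α := by
  obtain ⟨hαd, hαev, hBev, hses1, hses2, hskw, hjac⟩ := hC
  clear hαd hses1 hses2
  have hαX : ∀ u : A, Finsupp.mapRange.linearMap α (Finsupp.single (0:ℕ) u)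
      = Finsupp.single (0:ℕ) (α u) := by intro u; simp
  have hB00 : ∀ (i j : ZMod 2) (u v : A), u ∈ gr i → v ∈ gr j →
      B (Finsupp.single 0 u) (Finsupp.single 0 v) = genBr br c (sg i j) u v := by
    intro i j u v hu hv
    simpa using hB 0 0 i j u hu v hv
  have hB01 : ∀ (i j : ZMod 2) (u v : A), u ∈ gr i → v ∈ gr j →
      B (Finsupp.single 0 u) (Finsupp.single 1 v)
        = dVmap dR (genBr br c (sg i j) u v) + lmulV (genBr br c (sg i j) u v) := by
    intro i j u v hu hv
    simpa using hB 0 1 i j u hu v hv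
  have hB10 : ∀ (i j : ZMod 2) (u v : A), u ∈ gr i → v ∈ gr j →
      B (Finsupp.single 1 u) (Finsupp.single 0 v)
        = -(lmulV (genBr br c (sg i j) u v)) := by
    intro i j u v hu hv
    simpa using hB 1 0 i j u hu v hv
  have hα : EvenLin gr α := by
    intro i x hx
    have h := hαev i (Finsupp.single 0 x) (my_mem_grFinsupp_single gr 0 hx)
    rw [hαX] at h
    simpa using h 0
  have hbrev : EvenBilin gr br := by
    intro i j x hx y hy
    have h := hBev j i (Finsupp.single 0 y) (my_mem_grFinsupp_single gr 0 hy)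
      (Finsupp.single 0 x) (my_mem_grFinsupp_single gr 0 hx) 0
    rw [hB00 j i y x hy hx] at h
    rw [add_comm i j]
    simpa [genBr] using h 0
  have hcev : EvenBilin gr c := by
    intro i j x hx y hy
    have h := hBev j i (Finsupp.single 0 y) (my_mem_grFinsupp_single gr 0 hy)
      (Finsupp.single 0 x) (my_mem_grFinsupp_single gr 0 hx) 0
    rw [hB00 j i y x hy hx] at h
    rw [add_comm i j]
    simpa [genBr] using h 1
  have hskewA : ∀ (i j : ZMod 2) (x y : A), x ∈ gr i → y ∈ gr j →
      br x y = -(sg i j • br y x) := by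
    intro i j x y hx hy
    have h := hskw j i (Finsupp.single 0 y) (my_mem_grFinsupp_single gr 0 hy)
      (Finsupp.single 0 x) (my_mem_grFinsupp_single gr 0 hx)
    rw [hB00 j i y x hy hx, hB00 i j x y hx hy] at h
    unfold genBr at h
    rw [my_negSubst_pair] at h
    have h2 := congrArg (fun v : ℕ →₀ (ℕ →₀ A) => v 0 0) h
    rw [sg_comm i j]
    simpa [my_dR_single] using h2
  have KEY : ∀ (i j k : ZMod 2) (x y z : A), x ∈ gr i → y ∈ gr j → z ∈ gr k →
      br (br z y) (α x) = br (α z) (br y x) + sg i j • br (br z x) (α y) ∧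
      c (br z y) (α x) + br (c z y) (α x)
        = c (α z) (br y x) + sg i j • (c (br z x) (α y) + br (c z x) (α y)) ∧
      c (c z y) (α x) = sg i j • c (c z x) (α y) ∧
      c (c z y) (α x) + (sg i j * sg i k) • c (α x) (c z y)
        = sg i j • c (α z) (c x y) + (sg i j * (sg i k * sg j k)) • c (c x y) (α z) := by
    intro i j k x y z hx hy hz
    have hαx := hα i x hx; have hαy := hα j y hy; have hαz := hα k z hz
    have hw1 : br z y ∈ gr (j + k) := by rw [add_comm]; exact hbrev k j z hz y hy
    have hw2 : c z y ∈ gr (j + k) := by rw [add_comm]; exact hcev k j z hz y hy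
    have hw3 : c y z ∈ gr (j + k) := hcev j k y hy z hz
    have hv1 : br y x ∈ gr (i + j) := by rw [add_comm]; exact hbrev j i y hy x hx
    have hv2 : c y x ∈ gr (i + j) := by rw [add_comm]; exact hcev j i y hy x hx
    have hv3 : c x y ∈ gr (i + j) := hcev i j x hx y hy
    have hu1 : br z x ∈ gr (i + k) := by rw [add_comm]; exact hbrev k i z hz x hx
    have hu2 : c z x ∈ gr (i + k) := by rw [add_comm]; exact hcev k i z hz x hx
    have hu3 : c x z ∈ gr (i + k) := hcev i k x hx z hz
    have J := hjac i j k (Finsupp.single 0 x) (my_mem_grFinsupp_single gr 0 hx)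
      (Finsupp.single 0 y) (my_mem_grFinsupp_single gr 0 hy)
      (Finsupp.single 0 z) (my_mem_grFinsupp_single gr 0 hz)
    rw [my_sumL B (Finsupp.mapRange.linearMap α (Finsupp.single 0 x))
          (B (Finsupp.single 0 y) (Finsupp.single 0 z)),
        my_sumR B (Finsupp.mapRange.linearMap α (Finsupp.single 0 z))
          (B (Finsupp.single 0 x) (Finsupp.single 0 y)),
        my_sumL2 B (Finsupp.mapRange.linearMap α (Finsupp.single 0 y))
          (B (Finsupp.single 0 x) (Finsupp.single 0 z))] at J
    simp only [hαX] at J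
    rw [hB00 j k y z hy hz, hB00 i j x y hx hy, hB00 i k x z hx hz] at J
    have E1 := hB00 i (j+k) (α x) (br z y) hαx hw1
    have E2 := hB01 i (j+k) (α x) (c z y) hαx hw2
    have E3 := hB00 i (j+k) (α x) (c z y) hαx hw2
    have E4 : B (Finsupp.single 0 (α x)) (Finsupp.single 0 (sg j k • c y z))
        = sg j k • genBr br c (sg i (j+k)) (α x) (c y z) := by
      rw [← Finsupp.smul_single, map_smul, hB00 i (j+k) (α x) (c y z) hαx hw3]
    have E5 := hB00 (i+j) k (br y x) (α z) hv1 hαz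
    have E6 := hB10 (i+j) k (c y x) (α z) hv2 hαz
    have E7 := hB00 (i+j) k (c y x) (α z) hv2 hαz
    have E8 : B (Finsupp.single 0 (sg i j • c x y)) (Finsupp.single 0 (α z))
        = sg i j • genBr br c (sg (i+j) k) (c x y) (α z) := by
      rw [← Finsupp.smul_single, map_smul, LinearMap.smul_apply,
        hB00 (i+j) k (c x y) (α z) hv3 hαz]
    have E9 := hB00 j (i+k) (α y) (br z x) hαy hu1
    have E10 := hB01 j (i+k) (α y) (c z x) hαy hu2
    have E11 := hB00 j (i+k) (α y) (c z x) hαy hu2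
    have E12 : B (Finsupp.single 0 (α y)) (Finsupp.single 0 (sg i k • c x z))
        = sg i k • genBr br c (sg j (i+k)) (α y) (c x z) := by
      rw [← Finsupp.smul_single, map_smul, hB00 j (i+k) (α y) (c x z) hαy hu3]
    simp only [genBr, Finsupp.single_add, map_add, LinearMap.add_apply, E1, E2, E3, E4, E5,
      E6, E7, E8, E9, E10, E11, E12, map_smul, LinearMap.smul_apply, map_neg,
      LinearMap.neg_apply, LinearMap.comp_apply, LinearMap.flip_apply, Finsupp.lsum_single,
      Finsupp.lsingle_apply, my_lmulV_single, my_dVmap_single, my_dR_single, smul_add,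
      neg_add, Finset.sum_range_succ, Finset.sum_range_zero, Nat.choose_zero_right,
      Nat.choose_one_right, Nat.choose_self, Nat.cast_one, Nat.cast_ofNat, one_smul,
      zero_add, add_zero] at J
    refine ⟨?_, ?_, ?_, ?_⟩
    · have h := congrArg (fun q : (ℕ × ℕ) →₀ (ℕ →₀ A) => q (0,0) 0) J
      simp [Finsupp.single_apply, ← Prod.mk_zero_zero, ← Prod.mk_one_one, Prod.mk.injEq,
        sg_add_right, sg_add_left] at h
      linear_combination (norm := module) h
    · have h := congrArg (fun q : (ℕ × ℕ) →₀ (ℕ →₀ A) => q (0,0) 1) J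
      simp [Finsupp.single_apply, ← Prod.mk_zero_zero, ← Prod.mk_one_one, Prod.mk.injEq,
        sg_add_right, sg_add_left] at h
      linear_combination (norm := module) h
    · have h := congrArg (fun q : (ℕ × ℕ) →₀ (ℕ →₀ A) => q (0,0) 2) J
      simp [Finsupp.single_apply, ← Prod.mk_zero_zero, ← Prod.mk_one_one, Prod.mk.injEq,
        sg_add_right, sg_add_left] at h
      linear_combination (norm := module) h
    · have h := congrArg (fun q : (ℕ × ℕ) →₀ (ℕ →₀ A) => q (2,0) 0) J
      simp [Finsupp.single_apply, ← Prod.mk_zero_zero, ← Prod.mk_one_one, Prod.mk.injEq,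
        sg_add_right, sg_add_left] at h
      linear_combination (norm := module) h
  refine ⟨⟨hα, hbrev, fun i j x hx y hy => hskewA i j x y hx hy, ?_⟩,
    ⟨hα, hcev, ?_, ?_⟩, ?_⟩
  · -- Hom-Jacobi for br
    intro i j k x hx y hy z hz
    have E := (KEY i j k x y z hx hy hz).1
    rw [hskewA k j z y hz hy, hskewA j i y x hy hx] at E
    simp only [map_neg, map_smul, LinearMap.neg_apply, LinearMap.smul_apply] at E
    rw [hskewA k (i + j) (α z) (br x y) (hα k z hz) (hbrev i j x hx y hy)] at E
    rw [sg_add_right k i j, sg_comm k j, sg_comm j i, sg_comm k i] at E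
    rcases sg_cases i j with h1 | h1 <;> rcases sg_cases i k with h2 | h2 <;>
      rcases sg_cases j k with h3 | h3 <;>
      simp only [h1, h2, h3] at E ⊢ <;>
      first
        | linear_combination (norm := module) E
        | linear_combination (norm := module) -E
  · -- Hom-Novikov left symmetry
    intro i j k x hx y hy z hz
    have E4 := (KEY i k j x z y hx hz hy).2.2.2
    have N2a := (KEY k j i z y x hz hy hx).2.2.1
    have N2b := (KEY k i j z x y hz hx hy).2.2.1
    rw [sg_comm k j] at E4 N2a
    rw [sg_comm k i] at N2b
    rcases sg_cases i j with h1 | h1 <;> rcases sg_cases i k with h2 | h2 <;>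
      rcases sg_cases j k with h3 | h3 <;>
      simp only [h1, h2, h3] at E4 N2a N2b ⊢ <;>
      first
        | linear_combination (norm := module) E4 + N2a + N2b
        | linear_combination (norm := module) E4 + N2a - N2b
        | linear_combination (norm := module) -E4 + N2a + N2b
        | linear_combination (norm := module) -E4 + N2a - N2b
  · -- Hom-Novikov right identity
    intro i j k x hx y hy z hz
    have E := (KEY k j i z y x hz hy hx).2.2.1
    rw [sg_comm k j] at E
    exact E
  · -- compatibility
    intro i j k x hx y hy z hz
    have E := (KEY k j i z y x hz hy hx).2.1
    rw [sg_comm k j] at E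
    linear_combination (norm := module) E

end
end

section
/- Let (A,[·,·],∘,α) be a super Hom-Gel'fand-Dorfman bialgebra and let f_λ be a 2-cocycle on the associated quadratic Hom-Lie conformal superalgebra whose restriction to A × A has the form f_λ(u,v) = Σ_{i=0}^{n} λ^i f_i(u,v) with bilinear maps f_i: A × A → ℂ and f_n ≠ 0. If n > 3, then f_n(u∘v, α(w)) = 0 for all homogeneous u,v,w ∈ A. -/
noncomputable section

variable {A : Type*} [AddCommGroup A] [Module ℂ A]

section Cocycle

variable {M : Type*} [AddCommGroup M] [Module ℂ M]

/-- A 2-cocycle `f_λ : M × M → ℂ[λ]` on a Hom-Lie conformal superalgebra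
`(M, grM, dM, B, αM)`.  The cocycle identity
`f_{λ+μ}([u_λ v], α(w)) = f_λ(α(u), [v_μ w]) − (−1)^{|u||v|} f_μ(α(v), [u_λ w])`
is stated in `ℂ[λ,μ] = MvPolynomial (Fin 2) ℂ`, where `λ = X 0` and `μ = X 1`. -/
def IsCocycle (grM : ZMod 2 → Submodule ℂ M) (dM : M →ₗ[ℂ] M)
    (B : M →ₗ[ℂ] M →ₗ[ℂ] (ℕ →₀ M)) (αM : M →ₗ[ℂ] M)
    (cf : M →ₗ[ℂ] M →ₗ[ℂ] Polynomial ℂ) : Prop :=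
  -- skew-symmetry `f_λ(u,v) = −(−1)^{|u||v|} f_{−λ}(v,u)` (note `∂ 𝔠 = 0`)
  (∀ (i j : ZMod 2), ∀ u ∈ grM i, ∀ v ∈ grM j,
    cf u v = -(sg i j • (cf v u).comp (-Polynomial.X))) ∧
  -- conformal sesquilinearity `f_λ(∂u, v) = −λ f_λ(u,v) = −f_λ(u, ∂v)`
  (∀ u v : M, cf (dM u) v = -(Polynomial.X * cf u v)) ∧
  (∀ u v : M, cf u (dM v) = Polynomial.X * cf u v) ∧
  -- the cocycle identity
  (∀ (i j k : ZMod 2), ∀ u ∈ grM i, ∀ v ∈ grM j, ∀ w ∈ grM k,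
    ((B u v).sum fun n r => (MvPolynomial.X 0 : MvPolynomial (Fin 2) ℂ) ^ n
        * Polynomial.aeval
            (MvPolynomial.X 0 + MvPolynomial.X 1 : MvPolynomial (Fin 2) ℂ)
            (cf r (αM w)))
    = ((B v w).sum fun m s => (MvPolynomial.X 1 : MvPolynomial (Fin 2) ℂ) ^ m
        * Polynomial.aeval (MvPolynomial.X 0 : MvPolynomial (Fin 2) ℂ)
            (cf (αM u) s))
      - sg i j • ((B u w).sum fun n s =>
          (MvPolynomial.X 0 : MvPolynomial (Fin 2) ℂ) ^ n
            * Polynomial.aeval (MvPolynomial.X 1 : MvPolynomial (Fin 2) ℂ)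
                (cf (αM v) s)))

end Cocycle

namespace CocycleAux
open MvPolynomial

abbrev dd (a b : ℕ) : Fin 2 →₀ ℕ := Finsupp.single 0 a + Finsupp.single 1 b

lemma dd_inj {k m a b : ℕ} (h : dd k m = dd a b) : k = a ∧ m = b := by
  have h0 := congrFun (congrArg DFunLike.coe h) 0
  have h1 := congrFun (congrArg DFunLike.coe h) 1
  simp [Finsupp.single_apply] at h0 h1
  exact ⟨h0, h1⟩

lemma coeff_pow_add (i a b : ℕ) :
    MvPolynomial.coeff (dd a b) ((X 0 + X 1 : MvPolynomial (Fin 2) ℂ) ^ i)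
      = if i = a + b then ((a+b).choose a : ℂ) else 0 := by
  rw [add_pow, MvPolynomial.coeff_sum]
  have hterm : ∀ k ∈ Finset.range (i+1),
      MvPolynomial.coeff (dd a b) ((X 0:MvPolynomial (Fin 2) ℂ)^k * X 1^(i-k) * (i.choose k : MvPolynomial (Fin 2) ℂ))
      = if k = a ∧ i - k = b then (i.choose k : ℂ) else 0 := by
    intro k hk
    rw [MvPolynomial.X_pow_eq_monomial, MvPolynomial.X_pow_eq_monomial, monomial_mul, mul_one]
    rw [show ((i.choose k : ℕ) : MvPolynomial (Fin 2) ℂ) = MvPolynomial.C (i.choose k : ℂ) by simp [MvPolynomial.C_eq_coe_nat]]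
    rw [mul_comm, MvPolynomial.C_mul_monomial, mul_one, MvPolynomial.coeff_monomial]
    by_cases h : (Finsupp.single (0:Fin 2) k + Finsupp.single 1 (i-k)) = dd a b
    · obtain ⟨rfl, rfl⟩ := dd_inj h
      simp
    · rw [if_neg h, if_neg]
      rintro ⟨rfl, rfl⟩
      exact h rfl
  rw [Finset.sum_congr rfl hterm]
  by_cases hi : i = a + b
  · subst hi
    rw [Finset.sum_eq_single a]
    · simp
    · intro k hk hne
      rw [if_neg]; rintro ⟨rfl, h2⟩; exact hne rfl
    · intro h; exfalso; exact h (Finset.mem_range.2 (by omega))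
  · rw [if_neg hi, Finset.sum_eq_zero]
    intro k hk
    have hki : k ≤ i := Nat.lt_succ_iff.1 (Finset.mem_range.1 hk)
    rw [if_neg]; rintro ⟨rfl, h2⟩
    omega

lemma coeff_aeval_add (p : Polynomial ℂ) (a b : ℕ) :
    MvPolynomial.coeff (dd a b) (Polynomial.aeval (X 0 + X 1 : MvPolynomial (Fin 2) ℂ) p)
      = ((a+b).choose a : ℂ) * p.coeff (a+b) := by
  induction p using Polynomial.induction_on' with
  | add p q hp hq => rw [map_add, MvPolynomial.coeff_add, hp, hq, Polynomial.coeff_add]; ring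
  | monomial i r =>
      rw [Polynomial.aeval_monomial, Polynomial.coeff_monomial]
      rw [show algebraMap ℂ (MvPolynomial (Fin 2) ℂ) r = MvPolynomial.C r from rfl]
      rw [MvPolynomial.coeff_C_mul, coeff_pow_add]
      by_cases h : i = a + b <;> simp [h, mul_comm]

lemma coeff_pow_single (s : Fin 2) (i a b : ℕ) (h : Finsupp.single s i ≠ dd a b) :
    MvPolynomial.coeff (dd a b) ((X s : MvPolynomial (Fin 2) ℂ) ^ i) = 0 := by
  rw [MvPolynomial.X_pow_eq_monomial, MvPolynomial.coeff_monomial, if_neg h]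

lemma coeff_aeval_X0 (p : Polynomial ℂ) (a b : ℕ) (hb : b ≠ 0) :
    MvPolynomial.coeff (dd a b) (Polynomial.aeval (X 0 : MvPolynomial (Fin 2) ℂ) p) = 0 := by
  induction p using Polynomial.induction_on' with
  | add p q hp hq => rw [map_add, MvPolynomial.coeff_add, hp, hq, add_zero]
  | monomial i r =>
      rw [Polynomial.aeval_monomial,
        show algebraMap ℂ (MvPolynomial (Fin 2) ℂ) r = MvPolynomial.C r from rfl,
        MvPolynomial.coeff_C_mul, coeff_pow_single, mul_zero]
      intro h
      have := congrFun (congrArg DFunLike.coe h) 1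
      simp [Finsupp.single_apply] at this
      exact hb this.symm

lemma coeff_aeval_X1 (p : Polynomial ℂ) (a b : ℕ) (ha : a ≠ 0) :
    MvPolynomial.coeff (dd a b) (Polynomial.aeval (X 1 : MvPolynomial (Fin 2) ℂ) p) = 0 := by
  induction p using Polynomial.induction_on' with
  | add p q hp hq => rw [map_add, MvPolynomial.coeff_add, hp, hq, add_zero]
  | monomial i r =>
      rw [Polynomial.aeval_monomial,
        show algebraMap ℂ (MvPolynomial (Fin 2) ℂ) r = MvPolynomial.C r from rfl,
        MvPolynomial.coeff_C_mul, coeff_pow_single, mul_zero]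
      intro h
      have := congrFun (congrArg DFunLike.coe h) 0
      simp [Finsupp.single_apply] at this
      exact ha this.symm

lemma coeff_X0_mul (q : MvPolynomial (Fin 2) ℂ) (a b : ℕ) :
    MvPolynomial.coeff (dd (a+1) b) ((X 0 : MvPolynomial (Fin 2) ℂ) * q)
      = MvPolynomial.coeff (dd a b) q := by
  have : dd (a+1) b = Finsupp.single 0 1 + dd a b := by
    ext s; simp [Finsupp.single_apply]; split <;> omega
  rw [this, MvPolynomial.coeff_X_mul]

lemma coeff_X1_mul (q : MvPolynomial (Fin 2) ℂ) (a b : ℕ) :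
    MvPolynomial.coeff (dd a (b+1)) ((X 1 : MvPolynomial (Fin 2) ℂ) * q)
      = MvPolynomial.coeff (dd a b) q := by
  have : dd a (b+1) = Finsupp.single 1 1 + dd a b := by
    ext s; simp [Finsupp.single_apply]
    split <;> split <;> omega
  rw [this, MvPolynomial.coeff_X_mul]

lemma choose2_cast (m : ℕ) : ((m+4).choose 2 : ℂ) * 2 = (m+4)*(m+3) := by
  have h : (m+4).choose 2 * 2 = (m+4)*(m+3) := by
    have := Nat.add_one_mul_choose_eq (m+3) 1
    simp only [Nat.succ_eq_add_one, Nat.choose_one_right, show m+3+1 = m+4 from rfl,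
      show (1:ℕ)+1 = 2 from rfl] at this
    omega
  exact_mod_cast congrArg (Nat.cast : ℕ → ℂ) h

lemma choose3_cast (m : ℕ) : ((m+4).choose 3 : ℂ) * 6 = (m+4)*(m+3)*(m+2) := by
  have h : (m+4).choose 3 * 6 = (m+4)*(m+3)*(m+2) := by
    have h1 := Nat.add_one_mul_choose_eq (m+3) 2
    have h2 := Nat.add_one_mul_choose_eq (m+2) 1
    simp only [Nat.succ_eq_add_one, Nat.choose_one_right, show m+3+1 = m+4 from rfl,
      show m+2+1 = m+3 from rfl, show (1:ℕ)+1 = 2 from rfl, show (2:ℕ)+1 = 3 from rfl] at h1 h2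
    nlinarith [h1, h2]
  exact_mod_cast congrArg (Nat.cast : ℕ → ℂ) h

/-- Extraction of the two key coefficient identities from the polynomial identity. -/
lemma extract_key (m : ℕ) (F1 F2 F3 G1 G2 G3 H1 H2 H3 : Polynomial ℂ) (sgn : ℂ)
    (hF1 : F1.coeff (m+5) = 0)
    (E : Polynomial.aeval (X 0 + X 1 : MvPolynomial (Fin 2) ℂ) F1
          - (X 0 * Polynomial.aeval (X 0 + X 1 : MvPolynomial (Fin 2) ℂ) F2
              + X 1 * Polynomial.aeval (X 0 + X 1 : MvPolynomial (Fin 2) ℂ) F2)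
          + X 0 * Polynomial.aeval (X 0 + X 1 : MvPolynomial (Fin 2) ℂ) F3
        = (Polynomial.aeval (X 0 : MvPolynomial (Fin 2) ℂ) G1
            + X 0 * Polynomial.aeval (X 0 : MvPolynomial (Fin 2) ℂ) G2
            + X 1 * Polynomial.aeval (X 0 : MvPolynomial (Fin 2) ℂ) G3)
          - MvPolynomial.C sgn * (Polynomial.aeval (X 1 : MvPolynomial (Fin 2) ℂ) H1
            + X 1 * Polynomial.aeval (X 1 : MvPolynomial (Fin 2) ℂ) H2
            + X 0 * Polynomial.aeval (X 1 : MvPolynomial (Fin 2) ℂ) H3)) :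
    ((((m+4).choose 1 : ℂ) + ((m+4).choose 2 : ℂ)) * F2.coeff (m+4)
        = ((m+4).choose 1 : ℂ) * F3.coeff (m+4))
    ∧ ((((m+4).choose 2 : ℂ) + ((m+4).choose 3 : ℂ)) * F2.coeff (m+4)
        = ((m+4).choose 2 : ℂ) * F3.coeff (m+4)) := by
  have hRzero : ∀ a b : ℕ, a ≠ 0 → a ≠ 1 → b ≠ 0 → b ≠ 1 →
      MvPolynomial.coeff (dd a b)
        ((Polynomial.aeval (X 0 : MvPolynomial (Fin 2) ℂ) G1
            + X 0 * Polynomial.aeval (X 0 : MvPolynomial (Fin 2) ℂ) G2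
            + X 1 * Polynomial.aeval (X 0 : MvPolynomial (Fin 2) ℂ) G3)
          - MvPolynomial.C sgn * (Polynomial.aeval (X 1 : MvPolynomial (Fin 2) ℂ) H1
            + X 1 * Polynomial.aeval (X 1 : MvPolynomial (Fin 2) ℂ) H2
            + X 0 * Polynomial.aeval (X 1 : MvPolynomial (Fin 2) ℂ) H3)) = 0 := by
    intro a b ha ha1 hb hb1
    obtain ⟨a', rfl⟩ : ∃ a', a = a' + 1 := ⟨a - 1, by omega⟩
    obtain ⟨b', rfl⟩ : ∃ b', b = b' + 1 := ⟨b - 1, by omega⟩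
    have ha' : a' ≠ 0 := by omega
    have hb' : b' ≠ 0 := by omega
    rw [MvPolynomial.coeff_sub, MvPolynomial.coeff_add, MvPolynomial.coeff_add,
      coeff_aeval_X0 _ _ _ (by omega), coeff_X0_mul, coeff_aeval_X0 _ _ _ (by omega),
      coeff_X1_mul, coeff_aeval_X0 _ _ _ hb',
      MvPolynomial.coeff_C_mul, MvPolynomial.coeff_add, MvPolynomial.coeff_add,
      coeff_aeval_X1 _ _ _ (by omega), coeff_X1_mul, coeff_aeval_X1 _ _ _ (by omega),
      coeff_X0_mul, coeff_aeval_X1 _ _ _ ha']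
    ring
  constructor
  · have h1 := congrArg (MvPolynomial.coeff (dd 2 (m+3))) E
    rw [hRzero 2 (m+3) (by omega) (by omega) (by omega) (by omega)] at h1
    rw [MvPolynomial.coeff_add, MvPolynomial.coeff_sub, MvPolynomial.coeff_add,
      coeff_aeval_add,
      show (dd 2 (m+3)) = dd (1+1) (m+3) from rfl, coeff_X0_mul, coeff_X0_mul,
      show (dd (1+1) (m+3)) = dd (1+1) ((m+2)+1) from rfl, coeff_X1_mul,
      coeff_aeval_add, coeff_aeval_add, coeff_aeval_add] at h1
    rw [show (1+1)+(m+3) = m+5 from by omega, show 1+(m+3) = m+4 from by omega,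
      show (1+1)+(m+2) = m+4 from by omega, hF1, mul_zero] at h1
    rw [show (m+4).choose (1+1) = (m+4).choose 2 from rfl,
      show (m+4).choose 1 = (m+4).choose 1 from rfl] at h1
    have := h1
    push_cast at this ⊢
    linear_combination -this
  · have h1 := congrArg (MvPolynomial.coeff (dd 3 (m+2))) E
    rw [hRzero 3 (m+2) (by omega) (by omega) (by omega) (by omega)] at h1
    rw [MvPolynomial.coeff_add, MvPolynomial.coeff_sub, MvPolynomial.coeff_add,
      coeff_aeval_add,
      show (dd 3 (m+2)) = dd (2+1) (m+2) from rfl, coeff_X0_mul, coeff_X0_mul,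
      show (dd (2+1) (m+2)) = dd (2+1) ((m+1)+1) from rfl, coeff_X1_mul,
      coeff_aeval_add, coeff_aeval_add, coeff_aeval_add] at h1
    rw [show (2+1)+(m+2) = m+5 from by omega, show 2+(m+2) = m+4 from by omega,
      show (2+1)+(m+1) = m+4 from by omega, hF1, mul_zero] at h1
    have := h1
    push_cast at this ⊢
    rw [show (m+4).choose (2+1) = (m+4).choose 3 from rfl] at this
    linear_combination -this

end CocycleAux

/-- Let `f_λ` be a 2-cocycle on the quadratic Hom-Lie conformal
superalgebra associated to a super Hom-Gel'fand-Dorfman bialgebra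
`(A, [·,·], ∘, α)`, with `f_λ(u,v) = ∑_{i=0}^{n} λ^i f_i(u,v)` on `A × A` and
`f_n ≠ 0`.  If `n > 3`, then `f_n(u∘v, α(w)) = 0` for all homogeneous `u,v,w ∈ A`. -/
theorem cocycle_top_coeff_vanishes
    {A : Type*} [AddCommGroup A] [Module ℂ A]
    (gr : ZMod 2 → Submodule ℂ A) (hgr : IsSupergrading gr)
    (br c : A →ₗ[ℂ] A →ₗ[ℂ] A) (α : A →ₗ[ℂ] A)
    (hGD : SuperHomGD gr br c α)
    (B : (ℕ →₀ A) →ₗ[ℂ] (ℕ →₀ A) →ₗ[ℂ] (ℕ →₀ (ℕ →₀ A)))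
    (hB : AssocBracket gr br c B)
    (cf : (ℕ →₀ A) →ₗ[ℂ] (ℕ →₀ A) →ₗ[ℂ] Polynomial ℂ)
    (hcoc : IsCocycle (grFinsupp ℕ gr) dR B (Finsupp.mapRange.linearMap α) cf)
    (n : ℕ) (f : ℕ → (A →ₗ[ℂ] A →ₗ[ℂ] ℂ))
    (hres : ∀ u v : A, cf (Finsupp.single 0 u) (Finsupp.single 0 v)
      = ∑ i ∈ Finset.range (n + 1), Polynomial.C (f i u v) * Polynomial.X ^ i)
    (hfn : f n ≠ 0) (hn : 3 < n) :
    ∀ (i j k : ZMod 2), ∀ u ∈ gr i, ∀ v ∈ gr j, ∀ w ∈ gr k,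
      f n (c u v) (α w) = 0 := by
  intro i j k u hu v hv w hw
  obtain ⟨m, rfl⟩ : ∃ m, n = m + 4 := ⟨n - 4, by omega⟩
  classical
  -- memberships of generators in the induced grading
  have mem0 : ∀ (l : ZMod 2) (x : A), x ∈ gr l →
      Finsupp.single (0:ℕ) x ∈ grFinsupp ℕ gr l := by
    intro l x hx
    show ∀ s : ℕ, (Finsupp.single (0:ℕ) x) s ∈ gr l
    intro s
    rcases eq_or_ne s 0 with rfl | hs
    · simpa using hx
    · rw [Finsupp.single_apply, if_neg (Ne.symm hs)]
      exact zero_mem _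
  have hα : ∀ x : A, (Finsupp.mapRange.linearMap α) (Finsupp.single (0:ℕ) x)
      = Finsupp.single (0:ℕ) (α x) := by
    intro x
    rw [Finsupp.mapRange.linearMap_apply, Finsupp.mapRange_single]
  have hd1 : ∀ x : A, (Finsupp.single (1:ℕ) x) = dR (Finsupp.single (0:ℕ) x) := by
    intro x
    simp [dR, Finsupp.lmapDomain_apply, Finsupp.mapDomain_single]
  -- B on generators
  have hBuv := hB 0 0 i j u hu v hv
  have hBvw := hB 0 0 j k v hv w hw
  have hBuw := hB 0 0 i k u hu w hw
  simp only [Function.iterate_zero, id_eq, pow_zero, one_smul] at hBuv hBvw hBuw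
  -- instantiate the cocycle identity
  have hcid := hcoc.2.2.2 i j k _ (mem0 i u hu) _ (mem0 j v hv) _ (mem0 k w hw)
  rw [hBuv, hBvw, hBuw, hα u, hα v, hα w] at hcid
  simp only [genBr] at hcid
  rw [Finsupp.sum_add_index' (by intro a; simp) (by intro a b₁ b₂; simp [mul_add]),
      Finsupp.sum_single_index (by simp), Finsupp.sum_single_index (by simp),
      Finsupp.sum_add_index' (by intro a; simp) (by intro a b₁ b₂; simp [mul_add]),
      Finsupp.sum_single_index (by simp), Finsupp.sum_single_index (by simp),
      Finsupp.sum_add_index' (by intro a; simp) (by intro a b₁ b₂; simp [mul_add]),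
      Finsupp.sum_single_index (by simp), Finsupp.sum_single_index (by simp)] at hcid
  rw [hd1 (c v u), hd1 (c w v), hd1 (c w u)] at hcid
  simp only [map_add, LinearMap.add_apply, hcoc.2.1, hcoc.2.2.1, map_neg, map_mul,
    Polynomial.aeval_X, pow_zero, pow_one, one_mul, mul_add, mul_neg,
    MvPolynomial.smul_eq_C_mul] at hcid
  -- the canonical polynomial identity
  have E : Polynomial.aeval (MvPolynomial.X 0 + MvPolynomial.X 1 : MvPolynomial (Fin 2) ℂ)
          (cf (Finsupp.single 0 (br v u)) (Finsupp.single 0 (α w)))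
        - (MvPolynomial.X 0 * Polynomial.aeval
              (MvPolynomial.X 0 + MvPolynomial.X 1 : MvPolynomial (Fin 2) ℂ)
              (cf (Finsupp.single 0 (c v u)) (Finsupp.single 0 (α w)))
            + MvPolynomial.X 1 * Polynomial.aeval
              (MvPolynomial.X 0 + MvPolynomial.X 1 : MvPolynomial (Fin 2) ℂ)
              (cf (Finsupp.single 0 (c v u)) (Finsupp.single 0 (α w))))
        + MvPolynomial.X 0 * Polynomial.aeval
            (MvPolynomial.X 0 + MvPolynomial.X 1 : MvPolynomial (Fin 2) ℂ)
            (cf (Finsupp.single 0 (c v u + sg i j • c u v)) (Finsupp.single 0 (α w)))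
      = (Polynomial.aeval (MvPolynomial.X 0 : MvPolynomial (Fin 2) ℂ)
            (cf (Finsupp.single 0 (α u)) (Finsupp.single 0 (br w v)))
          + MvPolynomial.X 0 * Polynomial.aeval (MvPolynomial.X 0 : MvPolynomial (Fin 2) ℂ)
            (cf (Finsupp.single 0 (α u)) (Finsupp.single 0 (c w v)))
          + MvPolynomial.X 1 * Polynomial.aeval (MvPolynomial.X 0 : MvPolynomial (Fin 2) ℂ)
            (cf (Finsupp.single 0 (α u)) (Finsupp.single 0 (c w v + sg j k • c v w))))
        - MvPolynomial.C (sg i j) *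
          (Polynomial.aeval (MvPolynomial.X 1 : MvPolynomial (Fin 2) ℂ)
            (cf (Finsupp.single 0 (α v)) (Finsupp.single 0 (br w u)))
          + MvPolynomial.X 1 * Polynomial.aeval (MvPolynomial.X 1 : MvPolynomial (Fin 2) ℂ)
            (cf (Finsupp.single 0 (α v)) (Finsupp.single 0 (c w u)))
          + MvPolynomial.X 0 * Polynomial.aeval (MvPolynomial.X 1 : MvPolynomial (Fin 2) ℂ)
            (cf (Finsupp.single 0 (α v)) (Finsupp.single 0 (c w u + sg i k • c u w)))) := by
    linear_combination hcid
  -- coefficient formula for the restriction of cf to A × A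
  have hco : ∀ (a b : A) (t : ℕ),
      (cf (Finsupp.single 0 a) (Finsupp.single 0 b)).coeff t
        = if t < m+4+1 then f t a b else 0 := by
    intro a b t
    rw [hres, Polynomial.finset_sum_coeff]
    simp only [Polynomial.coeff_C_mul, Polynomial.coeff_X_pow, mul_ite, mul_one, mul_zero]
    rw [Finset.sum_ite_eq (Finset.range (m+4+1)) t (fun i => f i a b)]
    simp [Finset.mem_range]
  have hF1 : (cf (Finsupp.single 0 (br v u)) (Finsupp.single 0 (α w))).coeff (m+5) = 0 := by
    rw [hco]
    simp
  obtain ⟨hE1, hE2⟩ := CocycleAux.extract_key m _ _ _ _ _ _ _ _ _ (sg i j) hF1 E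
  -- translate the coefficients
  have hY : (cf (Finsupp.single 0 (c v u)) (Finsupp.single 0 (α w))).coeff (m+4)
      = f (m+4) (c v u) (α w) := by rw [hco]; simp
  have hX : (cf (Finsupp.single 0 (c v u + sg i j • c u v)) (Finsupp.single 0 (α w))).coeff (m+4)
      = f (m+4) (c v u) (α w) + sg i j * f (m+4) (c u v) (α w) := by
    rw [hco]
    simp [map_add, map_smul, smul_eq_mul]
  rw [hY, hX] at hE1 hE2
  set Y := f (m+4) (c v u) (α w) with hYdef
  set Z := f (m+4) (c u v) (α w) with hZdef
  -- cast the binomial coefficients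
  have t2 := CocycleAux.choose2_cast m
  have t3 := CocycleAux.choose3_cast m
  simp only [Nat.choose_one_right] at hE1 hE2
  push_cast at hE1 hE2 t2 t3
  set c2 := (((m+4).choose 2 : ℕ) : ℂ)
  set c3 := (((m+4).choose 3 : ℕ) : ℂ)
  -- the linear algebra
  have key : (3*((m:ℂ)+4)^2*((m:ℂ)+3)*((m:ℂ)+5)) * Y = 0 := by
    linear_combination (36*c2) * hE1 - (36*((m:ℂ)+4)) * hE2
      - (9*(2*c2+((m:ℂ)+4)*((m:ℂ)+3))*Y) * t2 + (6*((m:ℂ)+4)*Y) * t3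
  have hm4 : ((m:ℂ)+4) ≠ 0 := by
    have h' : ((m:ℂ)+4) = ((m+4 : ℕ) : ℂ) := by push_cast; ring
    rw [h']
    exact Nat.cast_ne_zero.2 (show m+4 ≠ 0 by omega)
  have hm3 : ((m:ℂ)+3) ≠ 0 := by
    have h' : ((m:ℂ)+3) = ((m+3 : ℕ) : ℂ) := by push_cast; ring
    rw [h']
    exact Nat.cast_ne_zero.2 (show m+3 ≠ 0 by omega)
  have hm5 : ((m:ℂ)+5) ≠ 0 := by
    have h' : ((m:ℂ)+5) = ((m+5 : ℕ) : ℂ) := by push_cast; ring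
    rw [h']
    exact Nat.cast_ne_zero.2 (show m+5 ≠ 0 by omega)
  have hYzero : Y = 0 := by
    have hnz : (3*((m:ℂ)+4)^2*((m:ℂ)+3)*((m:ℂ)+5)) ≠ 0 := by
      apply mul_ne_zero (mul_ne_zero (mul_ne_zero (by norm_num) (pow_ne_zero _ hm4)) hm3) hm5
    exact (mul_eq_zero.1 key).resolve_left hnz
  have hXzero : Y + sg i j * Z = 0 := by
    have h : ((m:ℂ)+4) * (Y + sg i j * Z) = 0 := by
      rw [hYzero] at hE1 ⊢
      linear_combination -hE1
    rcases mul_eq_zero.1 h with h' | h'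
    · exact absurd h' hm4
    · exact h'
  have hsg : sg i j ≠ 0 := by
    unfold sg
    exact pow_ne_zero _ (by norm_num)
  have hsgZ : sg i j * Z = 0 := by
    rw [hYzero, zero_add] at hXzero
    exact hXzero
  rcases mul_eq_zero.1 hsgZ with h' | h'
  · exact absurd h' hsg
  · exact h'


end
end

section
/- Let (A,[·,·],∘,α) be a super Hom-Gel'fand-Dorfman bialgebra and let f_λ be a 2-cocycle on the associated quadratic Hom-Lie conformal superalgebra whose restriction to A × A has the form f_λ(u,v) = Σ_{i=0}^{n} λ^i f_i(u,v) with bilinear maps f_i: A × A → ℂ, f_n ≠ 0, and n ≤ 3. Then for all homogeneous u,v,w ∈ A: (i) (−1)^{|u||v|} f₃(u∘v, α(w)) = f₃(α(u), w∘v) = f₃(v∘u, α(w)); (ii) f₃([v,u], α(w)) + (−1)^{|u||v|} f₂(u∘v, α(w)) = f₃(α(u), [w,v]) + f₂(α(u), w∘v); (iii) 3f₃([v,u], α(w)) − 2f₂(v∘u, α(w)) + (−1)^{|u||v|} f₂(u∘v, α(w)) = −(−1)^{|u||v|} f₂(α(v), w∘u + (−1)^{|u||w|} u∘w). -/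
noncomputable section

variable {A : Type*} [AddCommGroup A] [Module ℂ A]

section AuxCoeff
open MvPolynomial

private lemma aux_coeff_XX (a b e g : ℕ) :
    coeff (Finsupp.single (0 : Fin 2) a + Finsupp.single (1 : Fin 2) b)
      ((X 0 : MvPolynomial (Fin 2) ℂ)^e * (X 1 : MvPolynomial (Fin 2) ℂ)^g)
      = if e = a ∧ g = b then 1 else 0 := by
  rw [X_pow_eq_monomial, X_pow_eq_monomial, monomial_mul, one_mul, coeff_monomial]
  congr 1
  simp only [eq_iff_iff, Finsupp.ext_iff]
  constructor
  · intro h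
    have h0 := h 0
    have h1 := h 1
    simp [Finsupp.single_apply] at h0 h1
    exact ⟨h0.symm ▸ rfl, by omega⟩
  · rintro ⟨rfl, rfl⟩ x
    rfl

private lemma aux_coeff_master (a b e g j : ℕ) :
    coeff (Finsupp.single (0 : Fin 2) a + Finsupp.single (1 : Fin 2) b)
        ((X 0 : MvPolynomial (Fin 2) ℂ)^e * (X 1 : MvPolynomial (Fin 2) ℂ)^g
          * ((X 0 : MvPolynomial (Fin 2) ℂ) + X 1)^j)
      = if e ≤ a ∧ g ≤ b ∧ a - e + (b - g) = j then ((j.choose (a - e) : ℂ)) else 0 := by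
  rw [add_pow, Finset.mul_sum]
  have hterm : ∀ k : ℕ, (X 0 : MvPolynomial (Fin 2) ℂ)^e * (X 1 : MvPolynomial (Fin 2) ℂ)^g
      * ((X 0 : MvPolynomial (Fin 2) ℂ)^k * (X 1 : MvPolynomial (Fin 2) ℂ)^(j-k)
          * (j.choose k : MvPolynomial (Fin 2) ℂ))
      = (MvPolynomial.C ((j.choose k : ℂ)))
        * ((X 0 : MvPolynomial (Fin 2) ℂ)^(e+k) * (X 1 : MvPolynomial (Fin 2) ℂ)^(g+(j-k))) := by
    intro k
    rw [show ((j.choose k : MvPolynomial (Fin 2) ℂ)) = MvPolynomial.C ((j.choose k : ℂ)) from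
      (map_natCast (MvPolynomial.C : ℂ →+* MvPolynomial (Fin 2) ℂ) _).symm]
    ring
  simp only [hterm]
  rw [MvPolynomial.coeff_sum]
  simp only [coeff_C_mul, aux_coeff_XX]
  rw [Finset.sum_eq_single (a - e)]
  · by_cases h : e ≤ a ∧ g ≤ b ∧ a - e + (b - g) = j
    · obtain ⟨h1, h2, h3⟩ := h
      rw [if_pos (by omega), if_pos (by omega)]
      ring
    · rw [if_neg h]
      by_cases hc2 : e + (a - e) = a ∧ g + (j - (a - e)) = b
      · rw [if_pos hc2, Nat.choose_eq_zero_of_lt (by omega)]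
        simp
      · rw [if_neg hc2]; ring
  · intro k hk hne
    rw [if_neg (by simp only [Finset.mem_range] at hk; omega)]
    ring
  · intro h
    simp only [Finset.mem_range, not_lt] at h
    rw [Nat.choose_eq_zero_of_lt (by omega)]
    simp

private lemma aux_v1_s17 (a b j : ℕ) :
    coeff (Finsupp.single (0 : Fin 2) a + Finsupp.single (1 : Fin 2) b)
      (((X 0 : MvPolynomial (Fin 2) ℂ) + X 1)^j)
      = if a + b = j then (j.choose a : ℂ) else 0 := by
  rw [show ((X 0 : MvPolynomial (Fin 2) ℂ) + X 1)^j
    = (X 0 : MvPolynomial (Fin 2) ℂ)^0 * (X 1 : MvPolynomial (Fin 2) ℂ)^0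
        * ((X 0 : MvPolynomial (Fin 2) ℂ) + X 1)^j from by ring, aux_coeff_master]
  simp

private lemma aux_v2 (a b j : ℕ) :
    coeff (Finsupp.single (0 : Fin 2) a + Finsupp.single (1 : Fin 2) b)
      ((X 0 : MvPolynomial (Fin 2) ℂ) * ((X 0 : MvPolynomial (Fin 2) ℂ) + X 1)^j)
      = if 1 ≤ a ∧ a - 1 + b = j then (j.choose (a-1) : ℂ) else 0 := by
  rw [show (X 0 : MvPolynomial (Fin 2) ℂ) * ((X 0 : MvPolynomial (Fin 2) ℂ) + X 1)^j
    = (X 0 : MvPolynomial (Fin 2) ℂ)^1 * (X 1 : MvPolynomial (Fin 2) ℂ)^0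
        * ((X 0 : MvPolynomial (Fin 2) ℂ) + X 1)^j from by ring, aux_coeff_master]
  simp

private lemma aux_v3 (a b j : ℕ) :
    coeff (Finsupp.single (0 : Fin 2) a + Finsupp.single (1 : Fin 2) b)
      (((X 0 : MvPolynomial (Fin 2) ℂ) + X 1) * ((X 0 : MvPolynomial (Fin 2) ℂ) + X 1)^j)
      = if a + b = j + 1 then ((j+1).choose a : ℂ) else 0 := by
  rw [show ((X 0 : MvPolynomial (Fin 2) ℂ) + X 1) * ((X 0 : MvPolynomial (Fin 2) ℂ) + X 1)^j
    = (X 0 : MvPolynomial (Fin 2) ℂ)^0 * (X 1 : MvPolynomial (Fin 2) ℂ)^0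
        * ((X 0 : MvPolynomial (Fin 2) ℂ) + X 1)^(j+1) from by ring, aux_coeff_master]
  simp

private lemma aux_v4 (a b j : ℕ) :
    coeff (Finsupp.single (0 : Fin 2) a + Finsupp.single (1 : Fin 2) b)
      ((X 0 : MvPolynomial (Fin 2) ℂ)^j)
      = if j = a ∧ 0 = b then 1 else 0 := by
  rw [show (X 0 : MvPolynomial (Fin 2) ℂ)^j
    = (X 0 : MvPolynomial (Fin 2) ℂ)^j * (X 1 : MvPolynomial (Fin 2) ℂ)^0 from by ring,
    aux_coeff_XX]

private lemma aux_v5 (a b j : ℕ) :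
    coeff (Finsupp.single (0 : Fin 2) a + Finsupp.single (1 : Fin 2) b)
      ((X 0 : MvPolynomial (Fin 2) ℂ) * (X 0 : MvPolynomial (Fin 2) ℂ)^j)
      = if j + 1 = a ∧ 0 = b then 1 else 0 := by
  rw [show (X 0 : MvPolynomial (Fin 2) ℂ) * (X 0 : MvPolynomial (Fin 2) ℂ)^j
    = (X 0 : MvPolynomial (Fin 2) ℂ)^(j+1) * (X 1 : MvPolynomial (Fin 2) ℂ)^0 from by ring,
    aux_coeff_XX]

private lemma aux_v6 (a b j : ℕ) :
    coeff (Finsupp.single (0 : Fin 2) a + Finsupp.single (1 : Fin 2) b)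
      ((X 1 : MvPolynomial (Fin 2) ℂ) * (X 0 : MvPolynomial (Fin 2) ℂ)^j)
      = if j = a ∧ 1 = b then 1 else 0 := by
  rw [show (X 1 : MvPolynomial (Fin 2) ℂ) * (X 0 : MvPolynomial (Fin 2) ℂ)^j
    = (X 0 : MvPolynomial (Fin 2) ℂ)^j * (X 1 : MvPolynomial (Fin 2) ℂ)^1 from by ring,
    aux_coeff_XX]

private lemma aux_v7 (a b j : ℕ) :
    coeff (Finsupp.single (0 : Fin 2) a + Finsupp.single (1 : Fin 2) b)
      ((X 1 : MvPolynomial (Fin 2) ℂ)^j)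
      = if 0 = a ∧ j = b then 1 else 0 := by
  rw [show (X 1 : MvPolynomial (Fin 2) ℂ)^j
    = (X 0 : MvPolynomial (Fin 2) ℂ)^0 * (X 1 : MvPolynomial (Fin 2) ℂ)^j from by ring,
    aux_coeff_XX]

private lemma aux_v8 (a b j : ℕ) :
    coeff (Finsupp.single (0 : Fin 2) a + Finsupp.single (1 : Fin 2) b)
      ((X 1 : MvPolynomial (Fin 2) ℂ) * (X 1 : MvPolynomial (Fin 2) ℂ)^j)
      = if 0 = a ∧ j + 1 = b then 1 else 0 := by
  rw [show (X 1 : MvPolynomial (Fin 2) ℂ) * (X 1 : MvPolynomial (Fin 2) ℂ)^j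
    = (X 0 : MvPolynomial (Fin 2) ℂ)^0 * (X 1 : MvPolynomial (Fin 2) ℂ)^(j+1) from by ring,
    aux_coeff_XX]

private lemma aux_v9 (a b j : ℕ) :
    coeff (Finsupp.single (0 : Fin 2) a + Finsupp.single (1 : Fin 2) b)
      ((X 0 : MvPolynomial (Fin 2) ℂ) * (X 1 : MvPolynomial (Fin 2) ℂ)^j)
      = if 1 = a ∧ j = b then 1 else 0 := by
  rw [show (X 0 : MvPolynomial (Fin 2) ℂ) * (X 1 : MvPolynomial (Fin 2) ℂ)^j
    = (X 0 : MvPolynomial (Fin 2) ℂ)^1 * (X 1 : MvPolynomial (Fin 2) ℂ)^j from by ring,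
    aux_coeff_XX]

end AuxCoeff

/-- Let `f_λ` be a 2-cocycle on the quadratic Hom-Lie conformal
superalgebra associated to a super Hom-Gel'fand-Dorfman bialgebra
`(A, [·,·], ∘, α)`, with `f_λ(u,v) = ∑_{i=0}^{n} λ^i f_i(u,v)` on `A × A`, `f_n ≠ 0`,
`n ≤ 3` (and `f_i = 0` for `i > n`).  Then for all homogeneous `u, v, w ∈ A`:
(i) `(−1)^{|u||v|} f₃(u∘v, α(w)) = f₃(α(u), w∘v) = f₃(v∘u, α(w))`;
(ii) `f₃([v,u], α(w)) + (−1)^{|u||v|} f₂(u∘v, α(w)) = f₃(α(u), [w,v]) + f₂(α(u), w∘v)`;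
(iii) `3f₃([v,u], α(w)) − 2f₂(v∘u, α(w)) + (−1)^{|u||v|} f₂(u∘v, α(w))
      = −(−1)^{|u||v|} f₂(α(v), w∘u + (−1)^{|u||w|} u∘w)`. -/
theorem cocycle_coeff_relations_top
    {A : Type*} [AddCommGroup A] [Module ℂ A]
    (gr : ZMod 2 → Submodule ℂ A) (hgr : IsSupergrading gr)
    (br c : A →ₗ[ℂ] A →ₗ[ℂ] A) (α : A →ₗ[ℂ] A)
    (hGD : SuperHomGD gr br c α)
    (B : (ℕ →₀ A) →ₗ[ℂ] (ℕ →₀ A) →ₗ[ℂ] (ℕ →₀ (ℕ →₀ A)))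
    (hB : AssocBracket gr br c B)
    (cf : (ℕ →₀ A) →ₗ[ℂ] (ℕ →₀ A) →ₗ[ℂ] Polynomial ℂ)
    (hcoc : IsCocycle (grFinsupp ℕ gr) dR B (Finsupp.mapRange.linearMap α) cf)
    (n : ℕ) (f : ℕ → (A →ₗ[ℂ] A →ₗ[ℂ] ℂ))
    (hres : ∀ u v : A, cf (Finsupp.single 0 u) (Finsupp.single 0 v)
      = ∑ i ∈ Finset.range (n + 1), Polynomial.C (f i u v) * Polynomial.X ^ i)
    (hfn : f n ≠ 0) (hn : n ≤ 3) (hhigh : ∀ i : ℕ, n < i → f i = 0) :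
    ∀ (p q r : ZMod 2), ∀ u ∈ gr p, ∀ v ∈ gr q, ∀ w ∈ gr r,
      (sg p q * f 3 (c u v) (α w) = f 3 (α u) (c w v) ∧
        f 3 (α u) (c w v) = f 3 (c v u) (α w)) ∧
      (f 3 (br v u) (α w) + sg p q * f 2 (c u v) (α w)
        = f 3 (α u) (br w v) + f 2 (α u) (c w v)) ∧
      (3 * f 3 (br v u) (α w) - 2 * f 2 (c v u) (α w) + sg p q * f 2 (c u v) (α w)
        = -(sg p q * f 2 (α v) (c w u + sg p r • c u w))) := by
  intro p q r u hu v hv w hw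
  obtain ⟨hskew, hsq1, hsq2, hcid⟩ := hcoc
  have hmem : ∀ (i : ZMod 2) (x : A), x ∈ gr i →
      Finsupp.single (0:ℕ) x ∈ grFinsupp ℕ gr i := by
    intro i x hx t
    rw [Finsupp.single_apply]
    split
    · exact hx
    · exact zero_mem _
  have hα : ∀ x : A, (Finsupp.mapRange.linearMap α) (Finsupp.single (0:ℕ) x)
      = Finsupp.single (0:ℕ) (α x) := by
    intro x
    simp [Finsupp.mapRange.linearMap]
    exact Finsupp.mapRange_single (hf := map_zero α)
  have hB00 : ∀ (i j : ZMod 2) (x y : A), x ∈ gr i → y ∈ gr j →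
      B (Finsupp.single 0 x) (Finsupp.single 0 y) = genBr br c (sg i j) x y := by
    intro i j x y hx hy
    simpa using hB 0 0 i j x hx y hy
  have E := hcid p q r _ (hmem p u hu) _ (hmem q v hv) _ (hmem r w hw)
  simp only [hα, hB00 p q u v hu hv, hB00 q r v w hv hw, hB00 p r u w hu hw] at E
  have S1 : ((genBr br c (sg p q) u v).sum fun n r =>
        (MvPolynomial.X 0 : MvPolynomial (Fin 2) ℂ) ^ n
          * (Polynomial.aeval ((MvPolynomial.X 0 : MvPolynomial (Fin 2) ℂ) + MvPolynomial.X 1))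
            (cf r (Finsupp.single 0 (α w))))
      = (Polynomial.aeval ((MvPolynomial.X 0 : MvPolynomial (Fin 2) ℂ) + MvPolynomial.X 1))
          (cf (Finsupp.single 0 (br v u) + Finsupp.single 1 (c v u)) (Finsupp.single 0 (α w)))
        + (MvPolynomial.X 0 : MvPolynomial (Fin 2) ℂ)
          * (Polynomial.aeval ((MvPolynomial.X 0 : MvPolynomial (Fin 2) ℂ) + MvPolynomial.X 1))
            (cf (Finsupp.single 0 (c v u + sg p q • c u v)) (Finsupp.single 0 (α w))) := by
    rw [genBr, Finsupp.sum_add_index' (by simp) (by intro a b₁ b₂; simp [mul_add]),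
        Finsupp.sum_single_index (by simp), Finsupp.sum_single_index (by simp),
        pow_zero, pow_one, one_mul]
  have S2 : ((genBr br c (sg q r) v w).sum fun m s =>
        (MvPolynomial.X 1 : MvPolynomial (Fin 2) ℂ) ^ m
          * (Polynomial.aeval (MvPolynomial.X 0 : MvPolynomial (Fin 2) ℂ))
            (cf (Finsupp.single 0 (α u)) s))
      = (Polynomial.aeval (MvPolynomial.X 0 : MvPolynomial (Fin 2) ℂ))
          (cf (Finsupp.single 0 (α u))
            (Finsupp.single 0 (br w v) + Finsupp.single 1 (c w v)))
        + (MvPolynomial.X 1 : MvPolynomial (Fin 2) ℂ)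
          * (Polynomial.aeval (MvPolynomial.X 0 : MvPolynomial (Fin 2) ℂ))
            (cf (Finsupp.single 0 (α u)) (Finsupp.single 0 (c w v + sg q r • c v w))) := by
    rw [genBr, Finsupp.sum_add_index' (by simp) (by intro a b₁ b₂; simp [mul_add]),
        Finsupp.sum_single_index (by simp), Finsupp.sum_single_index (by simp),
        pow_zero, pow_one, one_mul]
  have S3 : ((genBr br c (sg p r) u w).sum fun n s =>
        (MvPolynomial.X 0 : MvPolynomial (Fin 2) ℂ) ^ n
          * (Polynomial.aeval (MvPolynomial.X 1 : MvPolynomial (Fin 2) ℂ))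
            (cf (Finsupp.single 0 (α v)) s))
      = (Polynomial.aeval (MvPolynomial.X 1 : MvPolynomial (Fin 2) ℂ))
          (cf (Finsupp.single 0 (α v))
            (Finsupp.single 0 (br w u) + Finsupp.single 1 (c w u)))
        + (MvPolynomial.X 0 : MvPolynomial (Fin 2) ℂ)
          * (Polynomial.aeval (MvPolynomial.X 1 : MvPolynomial (Fin 2) ℂ))
            (cf (Finsupp.single 0 (α v)) (Finsupp.single 0 (c w u + sg p r • c u w))) := by
    rw [genBr, Finsupp.sum_add_index' (by simp) (by intro a b₁ b₂; simp [mul_add]),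
        Finsupp.sum_single_index (by simp), Finsupp.sum_single_index (by simp),
        pow_zero, pow_one, one_mul]
  rw [S1, S2, S3] at E
  have hd : ∀ x : A, dR (Finsupp.single (0:ℕ) x) = Finsupp.single 1 x := by
    intro x
    simp [dR, Finsupp.lmapDomain, Finsupp.mapDomain_single]
  have c1 : ∀ x y : A, cf (Finsupp.single 1 x) (Finsupp.single 0 y)
      = -(Polynomial.X * cf (Finsupp.single 0 x) (Finsupp.single 0 y)) := by
    intro x y
    rw [← hd]
    exact hsq1 _ _
  have c2 : ∀ x y : A, cf (Finsupp.single 0 x) (Finsupp.single 1 y)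
      = Polynomial.X * cf (Finsupp.single 0 x) (Finsupp.single 0 y) := by
    intro x y
    rw [← hd]
    exact hsq2 _ _
  have hres4 : ∀ x y : A, cf (Finsupp.single 0 x) (Finsupp.single 0 y)
      = ∑ i ∈ Finset.range 4, f i x y • (Polynomial.X : Polynomial ℂ)^i := by
    intro x y
    rw [hres x y, Finset.sum_subset (Finset.range_subset_range.2 (by omega : n+1 ≤ 4))]
    · exact Finset.sum_congr rfl fun i _ => by rw [Polynomial.smul_eq_C_mul]
    · intro i _ hi
      rw [hhigh i (by simp only [Finset.mem_range, not_lt] at hi; omega)]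
      simp
  have hsm : ∀ (t : ℂ) (x : A), Finsupp.single (0:ℕ) (t • x)
      = t • Finsupp.single (0:ℕ) x := fun t x => (Finsupp.smul_single t 0 x).symm
  simp only [hsm, Finsupp.single_add, map_add, map_smul, LinearMap.add_apply,
    LinearMap.smul_apply, c1, c2, hres4, map_neg, map_mul, map_sum, map_pow,
    Polynomial.aeval_X, Finset.sum_range_succ, Finset.sum_range_zero, zero_add,
    mul_add, mul_smul_comm, smul_add, smul_smul, mul_neg, neg_add] at E
  have E40 := congrArg (MvPolynomial.coeff
    (Finsupp.single (0 : Fin 2) 4 + Finsupp.single (1 : Fin 2) 0)) E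
  have E22 := congrArg (MvPolynomial.coeff
    (Finsupp.single (0 : Fin 2) 2 + Finsupp.single (1 : Fin 2) 2)) E
  have E30 := congrArg (MvPolynomial.coeff
    (Finsupp.single (0 : Fin 2) 3 + Finsupp.single (1 : Fin 2) 0)) E
  have E12 := congrArg (MvPolynomial.coeff
    (Finsupp.single (0 : Fin 2) 1 + Finsupp.single (1 : Fin 2) 2)) E
  simp only [MvPolynomial.coeff_add, MvPolynomial.coeff_sub, MvPolynomial.coeff_neg,
    MvPolynomial.coeff_smul, aux_v2, aux_v3, aux_v5, aux_v6, aux_v8, aux_v9,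
    aux_v1_s17, aux_v4, aux_v7, smul_eq_mul] at E40 E22 E30 E12
  norm_num [Nat.choose] at E40 E22 E30 E12
  refine ⟨⟨?_, ?_⟩, ?_, ?_⟩
  · linear_combination E40
  · linear_combination E22 / 3 - E40
  · linear_combination E30
  · simp only [map_add, map_smul, smul_eq_mul]
    linear_combination E12

end
end

section
/- Let (A,[·,·],∘,α) be a super Hom-Gel'fand-Dorfman bialgebra and let f_λ be a 2-cocycle on the associated quadratic Hom-Lie conformal superalgebra whose restriction to A × A has the form f_λ(u,v) = Σ_{i=0}^{n} λ^i f_i(u,v) with bilinear maps f_i: A × A → ℂ, f_n ≠ 0, and n ≤ 3. Then for all homogeneous u,v,w ∈ A: (i) f₂([v,u], α(w)) + (−1)^{|u||v|} f₁(u∘v, α(w)) = f₂(α(u), [w,v]) + f₁(α(u), w∘v); (ii) f₁(α(u), w∘v + (−1)^{|v||w|} v∘w) − (−1)^{|u||v|} f₁(α(v), w∘u + (−1)^{|u||w|} u∘w) = 2f₂([v,u], α(w)) − f₁(v∘u, α(w)) + (−1)^{|u||v|} f₁(u∘v, α(w)); (iii) f₁(α(u), [w,v]) + f₀(α(u), w∘v)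 − (−1)^{|u||v|} f₀(α(v), w∘u + (−1)^{|u||w|} u∘w) = f₁([v,u], α(w)) + (−1)^{|u||v|} f₀(u∘v, α(w)); (iv) f₀(α(u), [w,v]) − (−1)^{|u||v|} f₀(α(v), [w,u]) = f₀([v,u], α(w)). -/
noncomputable section

variable {A : Type*} [AddCommGroup A] [Module ℂ A]

section AuxLemmas
variable {A : Type*} [AddCommGroup A] [Module ℂ A]

lemma mem_grF (gr : ZMod 2 → Submodule ℂ A) {i : ZMod 2} {x : A} (hx : x ∈ gr i) (k : ℕ) :
    (Finsupp.single k x : ℕ →₀ A) ∈ grFinsupp ℕ gr i := by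
  intro s
  rw [Finsupp.single_apply]
  split
  · exact hx
  · exact zero_mem _

lemma dR_single (x : A) (k : ℕ) : dR (Finsupp.single k x) = Finsupp.single (k+1) x := by
  simp [dR, Finsupp.mapDomain_single]

lemma genBr_sum {M : Type*} [AddCommMonoid M] (br c : A →ₗ[ℂ] A →ₗ[ℂ] A) (s : ℂ) (x y : A)
    (F : ℕ → (ℕ →₀ A) → M) (h0 : ∀ n, F n 0 = 0)
    (hadd : ∀ n a b, F n (a + b) = F n a + F n b) :
    (genBr br c s x y).sum F
      = F 0 (Finsupp.single 0 (br y x) + Finsupp.single 1 (c y x))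
        + F 1 (Finsupp.single 0 (c y x + s • c x y)) := by
  unfold genBr
  rw [Finsupp.sum_add_index' h0 hadd, Finsupp.sum_single_index (h0 0),
    Finsupp.sum_single_index (h0 1)]

end AuxLemmas

set_option maxRecDepth 16000 in
set_option maxHeartbeats 2000000 in
/-- Let `f_λ` be a 2-cocycle on the quadratic Hom-Lie conformal
superalgebra associated to a super Hom-Gel'fand-Dorfman bialgebra
`(A, [·,·], ∘, α)`, with `f_λ(u,v) = ∑_{i=0}^{n} λ^i f_i(u,v)` on `A × A`, `f_n ≠ 0`,
`n ≤ 3` (and `f_i = 0` for `i > n`).  Then for all homogeneous `u, v, w ∈ A`: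
(i) `f₂([v,u],α(w)) + (−1)^{|u||v|} f₁(u∘v,α(w)) = f₂(α(u),[w,v]) + f₁(α(u),w∘v)`;
(ii) `f₁(α(u), w∘v + (−1)^{|v||w|} v∘w) − (−1)^{|u||v|} f₁(α(v), w∘u + (−1)^{|u||w|} u∘w)
     = 2f₂([v,u],α(w)) − f₁(v∘u,α(w)) + (−1)^{|u||v|} f₁(u∘v,α(w))`;
(iii) `f₁(α(u),[w,v]) + f₀(α(u),w∘v) − (−1)^{|u||v|} f₀(α(v), w∘u + (−1)^{|u||w|} u∘w)
     = f₁([v,u],α(w)) + (−1)^{|u||v|} f₀(u∘v,α(w))`;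
(iv) `f₀(α(u),[w,v]) − (−1)^{|u||v|} f₀(α(v),[w,u]) = f₀([v,u],α(w))`. -/
theorem cocycle_coeff_relations_low
    {A : Type*} [AddCommGroup A] [Module ℂ A]
    (gr : ZMod 2 → Submodule ℂ A) (hgr : IsSupergrading gr)
    (br c : A →ₗ[ℂ] A →ₗ[ℂ] A) (α : A →ₗ[ℂ] A)
    (hGD : SuperHomGD gr br c α)
    (B : (ℕ →₀ A) →ₗ[ℂ] (ℕ →₀ A) →ₗ[ℂ] (ℕ →₀ (ℕ →₀ A)))
    (hB : AssocBracket gr br c B)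
    (cf : (ℕ →₀ A) →ₗ[ℂ] (ℕ →₀ A) →ₗ[ℂ] Polynomial ℂ)
    (hcoc : IsCocycle (grFinsupp ℕ gr) dR B (Finsupp.mapRange.linearMap α) cf)
    (n : ℕ) (f : ℕ → (A →ₗ[ℂ] A →ₗ[ℂ] ℂ))
    (hres : ∀ u v : A, cf (Finsupp.single 0 u) (Finsupp.single 0 v)
      = ∑ i ∈ Finset.range (n + 1), Polynomial.C (f i u v) * Polynomial.X ^ i)
    (hfn : f n ≠ 0) (hn : n ≤ 3) (hhigh : ∀ i : ℕ, n < i → f i = 0) :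
    ∀ (p q r : ZMod 2), ∀ u ∈ gr p, ∀ v ∈ gr q, ∀ w ∈ gr r,
      (f 2 (br v u) (α w) + sg p q * f 1 (c u v) (α w)
        = f 2 (α u) (br w v) + f 1 (α u) (c w v)) ∧
      (f 1 (α u) (c w v + sg q r • c v w) - sg p q * f 1 (α v) (c w u + sg p r • c u w)
        = 2 * f 2 (br v u) (α w) - f 1 (c v u) (α w) + sg p q * f 1 (c u v) (α w)) ∧
      (f 1 (α u) (br w v) + f 0 (α u) (c w v)
          - sg p q * f 0 (α v) (c w u + sg p r • c u w)
        = f 1 (br v u) (α w) + sg p q * f 0 (c u v) (α w)) ∧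
      (f 0 (α u) (br w v) - sg p q * f 0 (α v) (br w u) = f 0 (br v u) (α w)) := by
  intro p q r u hu v hv w hw
  -- restriction of `cf` to generators, padded to degree 3
  have hres4 : ∀ x y : A, cf (Finsupp.single 0 x) (Finsupp.single 0 y)
      = ∑ i ∈ Finset.range 4, Polynomial.C (f i x y) * Polynomial.X ^ i := by
    intro x y
    rw [hres]
    refine Finset.sum_subset (Finset.range_subset_range.2 (by omega)) ?_
    intro i hi hni
    have hz : f i = 0 := hhigh i (by simp only [Finset.mem_range] at hi hni; omega)
    simp [hz]
  have hcf1L : ∀ (x : A) (Y : ℕ →₀ A), cf (Finsupp.single 1 x) Y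
      = -(Polynomial.X * cf (Finsupp.single 0 x) Y) := by
    intro x Y
    rw [show (Finsupp.single 1 x : ℕ →₀ A) = dR (Finsupp.single 0 x) from (dR_single x 0).symm,
      hcoc.2.1]
  have hcf1R : ∀ (X' : ℕ →₀ A) (y : A), cf X' (Finsupp.single 1 y)
      = Polynomial.X * cf X' (Finsupp.single 0 y) := by
    intro X' y
    rw [show (Finsupp.single 1 y : ℕ →₀ A) = dR (Finsupp.single 0 y) from (dR_single y 0).symm,
      hcoc.2.2.1]
  have hBgen : ∀ (i j : ZMod 2), ∀ x ∈ gr i, ∀ y ∈ gr j,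
      B (Finsupp.single 0 x) (Finsupp.single 0 y) = genBr br c (sg i j) x y := by
    intro i j x hx y hy
    have h := hB 0 0 i j x hx y hy
    simpa using h
  have J := hcoc.2.2.2 p q r _ (mem_grF gr hu 0) _ (mem_grF gr hv 0) _ (mem_grF gr hw 0)
  rw [hBgen p q u hu v hv, hBgen q r v hv w hw, hBgen p r u hu w hw] at J
  rw [genBr_sum _ _ _ _ _ _ (by intro m; simp) (by intro m a b; simp [mul_add]),
      genBr_sum _ _ _ _ _ _ (by intro m; simp) (by intro m a b; simp [mul_add]),
      genBr_sum _ _ _ _ _ _ (by intro m; simp) (by intro m a b; simp [mul_add])] at J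
  simp only [Finsupp.mapRange.linearMap_apply, Finsupp.mapRange_single, map_add, map_smul,
    LinearMap.add_apply, LinearMap.smul_apply, hcf1L, hcf1R, hres4, pow_zero, pow_one, one_mul,
    Finset.sum_range_succ, Finset.sum_range_zero, zero_add, map_mul, map_pow, map_sub, map_neg,
    Polynomial.aeval_X, Polynomial.aeval_C, MvPolynomial.algebraMap_eq] at J
  simp only [map_one, smul_eq_mul] at J
  have E1 := congrArg (MvPolynomial.aeval (R := ℂ)
      (fun i : Fin 2 => if i = 0 then (Polynomial.X : Polynomial ℂ) else 0)) J
  simp only [map_add, map_sub, map_neg, map_mul, map_pow, map_smul, MvPolynomial.aeval_X,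
    MvPolynomial.aeval_C, Polynomial.algebraMap_eq, smul_eq_mul] at E1
  norm_num at E1
  ring_nf at E1
  have h0 := congrArg (fun P => Polynomial.coeff P 0) E1
  have h1 := congrArg (fun P => Polynomial.coeff P 1) E1
  have h2 := congrArg (fun P => Polynomial.coeff P 2) E1
  simp only [Polynomial.coeff_add, Polynomial.coeff_sub, Polynomial.coeff_neg,
    Polynomial.coeff_smul, smul_eq_mul, Polynomial.X_pow_mul, Polynomial.X_mul, mul_assoc,
    ← Polynomial.C_mul, Polynomial.coeff_mul_C, Polynomial.coeff_X_pow, Polynomial.coeff_X,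
    Polynomial.coeff_C, Polynomial.coeff_mul_X, Polynomial.coeff_C_mul,
    Polynomial.coeff_ofNat_zero, Polynomial.coeff_ofNat_succ, Polynomial.coeff_natCast_ite,
    Polynomial.coeff_ofNat_mul] at h0 h1 h2
  norm_num at h0 h1 h2
  have E3 := congrArg (MvPolynomial.aeval (R := ℂ)
      (fun _ : Fin 2 => (Polynomial.X : Polynomial ℂ))) J
  have E4 := congrArg (MvPolynomial.aeval (R := ℂ)
      (fun i : Fin 2 => if i = 0 then (Polynomial.X : Polynomial ℂ) else -Polynomial.X)) J
  simp only [map_add, map_sub, map_neg, map_mul, map_pow, map_smul, MvPolynomial.aeval_X,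
    MvPolynomial.aeval_C, Polynomial.algebraMap_eq, smul_eq_mul] at E3 E4
  norm_num at E3 E4
  ring_nf at E3 E4
  have h3 := congrArg (fun P => Polynomial.coeff P 2) E3
  have h4 := congrArg (fun P => Polynomial.coeff P 2) E4
  simp only [Polynomial.coeff_add, Polynomial.coeff_sub, Polynomial.coeff_neg,
    Polynomial.coeff_smul, smul_eq_mul, Polynomial.X_pow_mul, Polynomial.X_mul, mul_assoc,
    ← Polynomial.C_mul, Polynomial.coeff_mul_C, Polynomial.coeff_X_pow, Polynomial.coeff_X,
    Polynomial.coeff_C, Polynomial.coeff_mul_X, Polynomial.coeff_C_mul,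
    Polynomial.coeff_ofNat_zero, Polynomial.coeff_ofNat_succ, Polynomial.coeff_natCast_ite,
    Polynomial.coeff_ofNat_mul] at h3 h4
  norm_num at h3 h4
  refine ⟨by linear_combination h2, ?_, ?_, by linear_combination -h0⟩
  · simp only [map_add, map_smul, smul_eq_mul]
    linear_combination (h4 - h3) / 2
  · simp only [map_add, map_smul, smul_eq_mul]
    linear_combination -h1


end
end
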